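/- arXiv:0810.4667 — 11 statements merged into one kernel-verified Lean document; each statement's English description precedes it below -/
import Mathlib

section
/- If G is a graph with no isolated vertices on n vertices with maximum degree Δ(G), then the total domination number satisfies γ_t(G) ≤ n − Δ(G) + 1. -/
/-- A total dominating set: every vertex has a neighbor in `S`. -/
def SimpleGraph.TotalDominatingSet {V : Type*} (G : SimpleGraph V) (S : Set V) : Prop :=
  ∀ v : V, ∃ u ∈ S, G.Adj v u

/-- The total domination number: minimum cardinality of a total dominating set. -/
noncomputable def SimpleGraph.totalDominationNumber {V : Type*} (G : SimpleGraph V) : ℕ :=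
  sInf {k | ∃ S : Set V, G.TotalDominatingSet S ∧ S.ncard = k}

theorem total_domination_le_card_sub_maxDegree_add_one
    {V : Type*} [Fintype V] (G : SimpleGraph V) [DecidableRel G.Adj]
    (hiso : ∀ v : V, ∃ u : V, G.Adj v u) :
    G.totalDominationNumber ≤ Fintype.card V - G.maxDegree + 1 := by
  classical
  cases isEmpty_or_nonempty V with
  | inl h =>
    have h0 : G.totalDominationNumber ≤ 0 := by
      apply Nat.sInf_le
      exact ⟨∅, fun v => (h.false v).elim, by simp⟩
    omega
  | inr h =>
    obtain ⟨v, hv⟩ := G.exists_maximal_degree_vertex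
    obtain ⟨w, hw⟩ := hiso v
    set N : Set V := G.neighborSet v with hN
    set A : Set V := {x | x ∉ N ∧ x ≠ v ∧ ∀ u, G.Adj x u → u ∈ N ∧ u ≠ w} with hA
    set f : V → V := fun x => Classical.choose (hiso x) with hfdef
    have hf : ∀ x, G.Adj x (f x) := fun x => Classical.choose_spec (hiso x)
    set S : Set V := (Nᶜ \ A) ∪ {w} ∪ (f '' A) with hS
    have hvS : v ∈ Nᶜ \ A := by
      constructor
      · simp [hN]
      · intro hvA
        exact hvA.2.1 rfl
    have hSdom : G.TotalDominatingSet S := by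
      intro x
      by_cases hxN : x ∈ N
      · refine ⟨v, Or.inl (Or.inl hvS), ?_⟩
        exact (hxN : G.Adj v x).symm
      · by_cases hxv : x = v
        · exact ⟨w, Or.inl (Or.inr rfl), hxv ▸ hw⟩
        · by_cases hxA : x ∈ A
          · exact ⟨f x, Or.inr ⟨x, hxA, rfl⟩, hf x⟩
          · -- x ∉ N, x ≠ v, x ∉ A : some neighbor u of x has u ∉ N or u = w
            have : ¬ (∀ u, G.Adj x u → u ∈ N ∧ u ≠ w) := by
              intro hall
              exact hxA ⟨hxN, hxv, hall⟩
            push_neg at this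
            obtain ⟨u, hu, hu2⟩ := this
            by_cases huN : u ∈ N
            · have huw : u = w := hu2 huN
              exact ⟨w, Or.inl (Or.inr rfl), huw ▸ hu⟩
            · have huA : u ∉ A := by
                intro huA
                exact hxN (huA.2.2 x hu.symm).1
              exact ⟨u, Or.inl (Or.inl ⟨huN, huA⟩), hu⟩
    have hAsub : A ⊆ Nᶜ := fun x hx => hx.1
    have hNcard : N.ncard = G.maxDegree := by
      rw [hv, hN, Set.ncard_eq_toFinset_card', SimpleGraph.degree]
      congr 1
    have hcompl : N.ncard + Nᶜ.ncard = Fintype.card V := by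
      have := Set.ncard_add_ncard_compl N
      simpa [Nat.card_eq_fintype_card] using this
    have hdiff : (Nᶜ \ A).ncard + A.ncard = Nᶜ.ncard := by
      rw [Set.ncard_diff hAsub]
      have : A.ncard ≤ Nᶜ.ncard := Set.ncard_le_ncard hAsub (Set.toFinite _)
      omega
    have himg : (f '' A).ncard ≤ A.ncard := Set.ncard_image_le (Set.toFinite _)
    have hScard : S.ncard ≤ Fintype.card V - G.maxDegree + 1 := by
      have h1 : S.ncard ≤ ((Nᶜ \ A) ∪ {w}).ncard + (f '' A).ncard :=
        Set.ncard_union_le _ _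
      have h2 : ((Nᶜ \ A) ∪ {w}).ncard ≤ (Nᶜ \ A).ncard + 1 := by
        simpa using Set.ncard_union_le (Nᶜ \ A) {w}
      have hle : G.maxDegree ≤ Fintype.card V := by omega
      omega
    calc G.totalDominationNumber ≤ S.ncard := Nat.sInf_le ⟨S, hSdom, rfl⟩
      _ ≤ _ := hScard
end

section
/- If G is a connected graph on n vertices with maximum degree Δ(G) < n − 1, then γ_t(G) ≤ n − Δ(G). -/
theorem total_domination_le_card_sub_maxDegree
    {V : Type*} [Fintype V] (G : SimpleGraph V) [DecidableRel G.Adj]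
    (hconn : G.Connected) (hΔ : G.maxDegree < Fintype.card V - 1) :
    G.totalDominationNumber ≤ Fintype.card V - G.maxDegree := by
  classical
  have hne : Nonempty V := hconn.nonempty
  obtain ⟨v, hv⟩ := G.exists_maximal_degree_vertex
  -- parent function: every x ≠ v has a neighbor strictly closer to v
  have hstep : ∀ x : V, x ≠ v → ∃ y, G.Adj x y ∧ G.dist v y + 1 = G.dist v x := by
    intro x hx
    obtain ⟨p, hp⟩ := hconn.exists_walk_length_eq_dist v x
    cases hr : p.reverse with
    | nil =>
        exfalso
        have := congrArg SimpleGraph.Walk.length hr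
        rw [SimpleGraph.Walk.length_reverse] at this
        simp only [SimpleGraph.Walk.length_nil] at this
        rw [this] at hp
        exact hx (SimpleGraph.Connected.dist_eq_zero_iff hconn |>.mp hp.symm).symm
    | cons hadj q =>
        rename_i y
        refine ⟨y, hadj, ?_⟩
        have hlen : q.length + 1 = p.length := by
          have := congrArg SimpleGraph.Walk.length hr
          rw [SimpleGraph.Walk.length_reverse] at this
          simp only [SimpleGraph.Walk.length_cons] at this
          omega
        have h1 : G.dist v y ≤ q.length := by
          have := SimpleGraph.dist_le q.reverse
          simpa using this
        have h2 : G.dist v x ≤ G.dist v y + 1 := by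
          have ht := hconn.dist_triangle (u := v) (v := y) (w := x)
          have : G.dist y x ≤ 1 := (SimpleGraph.dist_eq_one_iff_adj.mpr hadj.symm).le
          omega
        omega
  let par : V → V := fun x => if h : x = v then v else (hstep x h).choose
  have hpar_adj : ∀ x (h : x ≠ v), G.Adj x (par x) := by
    intro x h
    simp only [par, dif_neg h]
    exact (hstep x h).choose_spec.1
  have hpar_dist : ∀ x (h : x ≠ v), G.dist v (par x) + 1 = G.dist v x := by
    intro x h
    simp only [par, dif_neg h]
    exact (hstep x h).choose_spec.2
  set T : Set V := {x | ¬ G.Adj v x ∧ x ≠ v} with hT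
  have hTcard : T.ncard = Fintype.card V - 1 - G.maxDegree := by
    have : T.toFinset = (insert v (G.neighborFinset v))ᶜ := by
      ext x
      simp [T, Set.mem_toFinset, eq_comm, and_comm, SimpleGraph.adj_comm]
    rw [Set.ncard_eq_toFinset_card', this, Finset.card_compl,
      Finset.card_insert_of_notMem (by simp), G.card_neighborFinset_eq_degree, ← hv]
    omega
  have hcard2 : G.maxDegree + 2 ≤ Fintype.card V := by omega
  have hTne : T.Nonempty := by
    rw [← Set.ncard_pos (Set.toFinite T), hTcard]; omega
  -- the total dominating set
  set S : Set V := insert v (par '' T) with hS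
  have hSdom : G.TotalDominatingSet S := by
    intro x
    by_cases hxv : x = v
    · -- v needs a neighbor in S: a vertex of T at minimal distance has parent adjacent to v
      obtain ⟨u, huT, humin⟩ := Set.exists_min_image T (fun z => G.dist v z) (Set.toFinite T) hTne
      have huv : u ≠ v := huT.2
      have hd := hpar_dist u huv
      have hd2 : 2 ≤ G.dist v u := by
        rcases Nat.lt_or_ge (G.dist v u) 2 with h | h
        · interval_cases h' : G.dist v u
          · exact absurd ((SimpleGraph.Connected.dist_eq_zero_iff hconn).mp h').symm huv
          · exact absurd (SimpleGraph.dist_eq_one_iff_adj.mp h') huT.1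
        · exact h
      have hpu : G.dist v (par u) = 1 := by
        rcases Nat.lt_or_ge (G.dist v (par u)) 2 with h | h
        · omega
        · -- par u would be in T with smaller distance
          exfalso
          have hpT : par u ∈ T := by
            constructor
            · intro hadj
              have := SimpleGraph.dist_eq_one_iff_adj.mpr hadj
              omega
            · intro he
              rw [← he] at h
              simp [SimpleGraph.dist_self] at h
          have := humin _ hpT
          omega
      refine ⟨par u, Set.mem_insert_of_mem _ ⟨u, huT, rfl⟩, ?_⟩
      rw [hxv]
      exact SimpleGraph.dist_eq_one_iff_adj.mp hpu
    · by_cases hadj : G.Adj v x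
      · exact ⟨v, Set.mem_insert _ _, hadj.symm⟩
      · have hxT : x ∈ T := ⟨hadj, hxv⟩
        exact ⟨par x, Set.mem_insert_of_mem _ ⟨x, hxT, rfl⟩, hpar_adj x hxv⟩
  have hScard : S.ncard ≤ Fintype.card V - G.maxDegree := by
    calc S.ncard ≤ (par '' T).ncard + 1 :=
          Set.ncard_insert_le _ _
      _ ≤ T.ncard + 1 := by
          have := Set.ncard_image_le (f := par) (s := T) (Set.toFinite T)
          omega
      _ ≤ Fintype.card V - G.maxDegree := by rw [hTcard]; omega
  calc G.totalDominationNumber ≤ S.ncard := Nat.sInf_le ⟨S, hSdom, rfl⟩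
    _ ≤ Fintype.card V - G.maxDegree := hScard
end

section
/- For n ≥ 3, the total domination number of the cycle C_n equals n/2 if n ≡ 0 (mod 4), and equals ⌊n/2⌋ + 1 otherwise. -/
open Finset
open scoped Fin.CommRing Fin.NatCast

lemma cg_adj {n : ℕ} (hn : 3 ≤ n) {u v : Fin n}
    (h : u.val + 1 = v.val ∨ v.val + 1 = u.val ∨ (u.val = 0 ∧ v.val + 1 = n) ∨
      (v.val = 0 ∧ u.val + 1 = n)) :
    (SimpleGraph.cycleGraph n).Adj u v := by
  have hu := u.isLt; have hv := v.isLt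
  rw [SimpleGraph.cycleGraph_adj']
  rcases h with h | h | ⟨h1, h2⟩ | ⟨h1, h2⟩
  · right
    rw [Fin.sub_def]
    show (n - u.val + v.val) % n = 1
    have : n - u.val + v.val = n + 1 := by omega
    rw [this, Nat.add_mod_left, Nat.mod_eq_of_lt (by omega)]
  · left
    rw [Fin.sub_def]
    show (n - v.val + u.val) % n = 1
    have : n - v.val + u.val = n + 1 := by omega
    rw [this, Nat.add_mod_left, Nat.mod_eq_of_lt (by omega)]
  · left
    rw [Fin.sub_def]
    show (n - v.val + u.val) % n = 1
    have : n - v.val + u.val = 1 := by omega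
    rw [this, Nat.mod_eq_of_lt (by omega)]
  · right
    rw [Fin.sub_def]
    show (n - u.val + v.val) % n = 1
    have : n - u.val + v.val = 1 := by omega
    rw [this, Nat.mod_eq_of_lt (by omega)]

lemma count_base (n : ℕ) :
    ((Finset.range n).filter (fun i => i % 4 = 1 ∨ i % 4 = 2)).card = (n + 2) / 4 + (n + 1) / 4 := by
  induction n with
  | zero => simp
  | succ n ih =>
    rw [Finset.range_add_one, Finset.filter_insert]
    by_cases h : n % 4 = 1 ∨ n % 4 = 2
    · rw [if_pos h, Finset.card_insert_of_notMem (by simp), ih]; omega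
    · rw [if_neg h, ih]; omega

lemma card_filter_fin (n : ℕ) (P : ℕ → Prop) [DecidablePred P] :
    ((Finset.univ : Finset (Fin n)).filter (fun i => P i.val)).card
      = ((Finset.range n).filter P).card := by
  apply Finset.card_bij (fun i _ => i.val)
  · intro a ha; simp at ha ⊢; exact ha

  · intro a _ b _ h; exact Fin.val_injective h
  · intro b hb; simp at hb; exact ⟨⟨b, hb.1⟩, by simp [hb.2], rfl⟩

lemma upper (n : ℕ) (hn : 3 ≤ n) :
    ∃ S : Set (Fin n), (SimpleGraph.cycleGraph n).TotalDominatingSet S ∧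
      S.ncard = (if n % 4 = 0 then n / 2 else n / 2 + 1) := by
  classical
  set Q : ℕ → Prop := fun i =>
    (i % 4 = 1 ∨ i % 4 = 2) ∨ (n % 4 = 1 ∧ i = 0) ∨ (n % 4 = 2 ∧ i + 2 = n) with hQ
  refine ⟨↑(Finset.univ.filter fun i : Fin n => Q i.val), ?_, ?_⟩
  · intro v
    have hv := v.isLt
    by_cases h1 : v.val % 4 = 2 ∨ v.val % 4 = 3
    · refine ⟨⟨v.val - 1, by omega⟩, ?_, cg_adj hn ?_⟩
      · simp only [Finset.coe_filter, Set.mem_setOf_eq, Finset.mem_univ, true_and, hQ]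
        left; omega
      · right; left; simp; omega
    · by_cases h2 : v.val + 1 < n
      · refine ⟨⟨v.val + 1, h2⟩, ?_, cg_adj hn ?_⟩
        · simp only [Finset.coe_filter, Set.mem_setOf_eq, Finset.mem_univ, true_and, hQ]
          left; omega
        · left; simp
      · by_cases h3 : n % 4 = 1
        · refine ⟨⟨0, by omega⟩, ?_, cg_adj hn ?_⟩
          · simp only [Finset.coe_filter, Set.mem_setOf_eq, Finset.mem_univ, true_and, hQ]
            right; left; exact ⟨h3, by norm_num⟩
          · right; right; right; simp; omega
        · have h4 : n % 4 = 2 := by omega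
          refine ⟨⟨n - 2, by omega⟩, ?_, cg_adj hn ?_⟩
          · simp only [Finset.coe_filter, Set.mem_setOf_eq, Finset.mem_univ, true_and, hQ]
            right; right; exact ⟨h4, by omega⟩
          · right; left; simp; omega
  · rw [Set.ncard_coe_finset, card_filter_fin n Q]
    have h4 : n % 4 = 0 ∨ n % 4 = 1 ∨ n % 4 = 2 ∨ n % 4 = 3 := by omega
    rcases h4 with h | h | h | h
    · rw [if_pos h]
      have : (Finset.range n).filter Q
          = (Finset.range n).filter (fun i => i % 4 = 1 ∨ i % 4 = 2) := by
        ext i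
        simp only [Finset.mem_filter, Finset.mem_range, hQ]
        omega
      rw [this, count_base n]
      omega
    · rw [if_neg (by omega)]
      have : (Finset.range n).filter Q
          = insert 0 ((Finset.range n).filter (fun i => i % 4 = 1 ∨ i % 4 = 2)) := by
        ext i
        simp only [Finset.mem_filter, Finset.mem_insert, Finset.mem_range, hQ]
        omega
      rw [this, Finset.card_insert_of_notMem (by simp), count_base n]
      omega
    · rw [if_neg (by omega)]
      have : (Finset.range n).filter Q
          = insert (n - 2) ((Finset.range n).filter (fun i => i % 4 = 1 ∨ i % 4 = 2)) := by
        ext i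
        simp only [Finset.mem_filter, Finset.mem_insert, Finset.mem_range, hQ]
        omega
      rw [this, Finset.card_insert_of_notMem (by simp; omega), count_base n]
      omega
    · rw [if_neg (by omega)]
      have : (Finset.range n).filter Q
          = (Finset.range n).filter (fun i => i % 4 = 1 ∨ i % 4 = 2) := by
        ext i
        simp only [Finset.mem_filter, Finset.mem_range, hQ]
        omega
      rw [this, count_base n]
      omega

lemma fin_val_one {n : ℕ} [NeZero n] (hn : 3 ≤ n) : (1 : Fin n).val = 1 := by
  rw [Fin.val_one']; exact Nat.mod_eq_of_lt (by omega)

lemma fin_val_two {n : ℕ} [NeZero n] (hn : 3 ≤ n) : (2 : Fin n).val = 2 := by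
  have : ((2:ℕ) : Fin n) = (2 : Fin n) := by norm_cast
  rw [← this, Fin.val_natCast]; exact Nat.mod_eq_of_lt (by omega)

lemma cg_nbr {n : ℕ} [NeZero n] (hn : 3 ≤ n) (v u : Fin n) :
    (SimpleGraph.cycleGraph n).Adj v u ↔ u = v - 1 ∨ u = v + 1 := by
  have h1 : (1 : Fin n).val = 1 := fin_val_one hn
  rw [SimpleGraph.cycleGraph_adj']
  constructor
  · rintro (h | h)
    · left
      have hvu : v - u = 1 := Fin.ext (by rw [h1]; exact h)
      linear_combination -hvu
    · right
      have hvu : u - v = 1 := Fin.ext (by rw [h1]; exact h)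
      linear_combination hvu
  · rintro (rfl | rfl)
    · left; rw [show v - (v - 1) = 1 by ring, h1]
    · right; rw [show v + 1 - v = 1 by ring, h1]

lemma sub_ne_add {n : ℕ} [NeZero n] (hn : 3 ≤ n) (v : Fin n) : v - 1 ≠ v + 1 := by
  intro h
  have h2 : (2 : Fin n) = 0 := by linear_combination -h
  have := fin_val_two (n := n) hn
  rw [h2] at this
  simp at this

lemma lower (n : ℕ) (hn : 3 ≤ n) (S : Set (Fin n))
    (hS : (SimpleGraph.cycleGraph n).TotalDominatingSet S) :
    (if n % 4 = 0 then n / 2 else n / 2 + 1) ≤ S.ncard := by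
  classical
  haveI : NeZero n := ⟨by omega⟩
  haveI : Fintype ↑S := Fintype.ofFinite ↑S
  rw [Set.ncard_eq_toFinset_card' S]
  set F : Finset (Fin n) := S.toFinset with hF
  set G := SimpleGraph.cycleGraph n with hG
  set g : Fin n → ℕ := fun v => (F.filter fun u => G.Adj v u).card with hg
  have h1 : ∀ v, 1 ≤ g v := by
    intro v
    obtain ⟨u, hu, hadj⟩ := hS v
    exact Finset.card_pos.mpr ⟨u, Finset.mem_filter.mpr ⟨Set.mem_toFinset.mpr hu, hadj⟩⟩
  have hdeg : ∀ u : Fin n, (Finset.univ.filter fun v => G.Adj v u).card = 2 := by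
    intro u
    have : (Finset.univ.filter fun v => G.Adj v u) = {u - 1, u + 1} := by
      ext w
      simp only [Finset.mem_filter, Finset.mem_univ, true_and, Finset.mem_insert,
        Finset.mem_singleton, hG]
      rw [SimpleGraph.adj_comm, cg_nbr hn]
    rw [this, Finset.card_pair (sub_ne_add hn u)]
  have hsum : ∑ v : Fin n, g v = 2 * F.card := by
    calc ∑ v : Fin n, g v
        = ∑ v : Fin n, ∑ u ∈ F, (if G.Adj v u then 1 else 0) :=
          Finset.sum_congr rfl fun v _ => Finset.card_filter _ _
      _ = ∑ u ∈ F, ∑ v : Fin n, (if G.Adj v u then 1 else 0) := Finset.sum_comm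
      _ = ∑ u ∈ F, (Finset.univ.filter fun v => G.Adj v u).card :=
          Finset.sum_congr rfl fun u _ => (Finset.card_filter _ _).symm
      _ = ∑ _u ∈ F, 2 := Finset.sum_congr rfl fun u _ => hdeg u
      _ = 2 * F.card := by rw [Finset.sum_const]; ring
  have hlow : n ≤ 2 * F.card := by
    calc n = ∑ _v : Fin n, 1 := by simp
      _ ≤ ∑ v : Fin n, g v := Finset.sum_le_sum fun v _ => h1 v
      _ = 2 * F.card := hsum
  by_cases hmod : n % 4 = 2
  · rw [if_neg (by omega)]
    by_contra hcon
    push_neg at hcon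
    have hcard : 2 * F.card = n := by omega
    have heq : ∀ v : Fin n, 1 = g v := by
      have := (Finset.sum_eq_sum_iff_of_le (f := fun _ : Fin n => 1) (g := g)
        (fun v _ => h1 v)).mp (by rw [hsum, hcard]; simp)
      intro v; exact this v (Finset.mem_univ v)
    -- every vertex has exactly one neighbor in F
    have h2 : ∀ i : Fin n, (i + 2 ∈ F ↔ i ∉ F) := by
      intro i
      obtain ⟨a, ha⟩ := Finset.card_eq_one.mp (heq (i + 1)).symm
      have hadj1 : G.Adj (i + 1) i := by
        rw [hG, cg_nbr hn]; left; ring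
      have hadj2 : G.Adj (i + 1) (i + 2) := by
        rw [hG, cg_nbr hn]; right; ring
      have hne : (i : Fin n) ≠ i + 2 := by
        intro h
        have h2' : (2 : Fin n) = 0 := by linear_combination -h
        have := fin_val_two (n := n) hn
        rw [h2'] at this; simp at this
      constructor
      · intro hmem hi
        have e1 : i = a := by
          have : i ∈ ({a} : Finset (Fin n)) := by
            rw [← ha]; exact Finset.mem_filter.mpr ⟨hi, hadj1⟩
          simpa using this
        have e2 : i + 2 = a := by
          have : i + 2 ∈ ({a} : Finset (Fin n)) := by
            rw [← ha]; exact Finset.mem_filter.mpr ⟨hmem, hadj2⟩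
          simpa using this
        exact hne (e1.trans e2.symm)
      · intro hi
        have haF : a ∈ F ∧ G.Adj (i + 1) a := by
          have : a ∈ F.filter fun u => G.Adj (i+1) u := ha ▸ Finset.mem_singleton_self a
          exact Finset.mem_filter.mp this
        have : a = i ∨ a = i + 2 := by
          have := haF.2
          rw [hG, cg_nbr hn] at this
          rcases this with h | h
          · left; rw [h]; ring
          · right; rw [h]; ring
        rcases this with rfl | rfl
        · exact absurd haF.1 hi
        · exact haF.1
    -- periodicity
    have key : ∀ k : ℕ, ∀ i : Fin n,
        ((i + ((2 * k : ℕ) : Fin n)) ∈ F) ↔ (if k % 2 = 0 then i ∈ F else i ∉ F) := by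
      intro k
      induction k with
      | zero => intro i; simp
      | succ k ih =>
        intro i
        have hcast : ((2 * (k + 1) : ℕ) : Fin n) = ((2 * k : ℕ) : Fin n) + 2 := by
          push_cast; ring
        rw [hcast, ← add_assoc, h2 (i + ((2 * k : ℕ) : Fin n))]
        have hih := ih i
        by_cases hk : k % 2 = 0
        · rw [if_pos hk] at hih
          rw [if_neg (by omega)]
          exact not_congr hih
        · rw [if_neg hk] at hih
          rw [if_pos (by omega)]
          simpa only [not_not] using not_congr hih
    have hfin := key (n / 2) ⟨0, by omega⟩
    rw [show (2 * (n / 2) : ℕ) = n by omega, Fin.natCast_self, add_zero,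
      if_neg (by omega)] at hfin
    tauto
  · by_cases h0 : n % 4 = 0
    · rw [if_pos h0]; omega
    · rw [if_neg h0]; omega

theorem totalDomination_cycleGraph (n : ℕ) (hn : 3 ≤ n) :
    (SimpleGraph.cycleGraph n).totalDominationNumber =
      if n % 4 = 0 then n / 2 else n / 2 + 1 := by
  obtain ⟨S, h1, h2⟩ := upper n hn
  apply le_antisymm
  · exact Nat.sInf_le ⟨S, h1, h2⟩
  · refine le_csInf ⟨_, ⟨S, h1, h2⟩⟩ ?_
    rintro k ⟨T, hT, rfl⟩
    exact lower n hn T hT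
end

section
/- For n ≥ 3, the total domination number of the path P_n equals n/2 if n ≡ 0 (mod 4), and equals ⌊n/2⌋ + 1 otherwise. -/
lemma count_mod4 (N : ℕ) :
    ((Finset.range N).filter (fun v => v % 4 = 1 ∨ v % 4 = 2)).card = (N+2)/4 + (N+1)/4 := by
  induction N with
  | zero => simp
  | succ n ih =>
    rw [Finset.range_add_one, Finset.filter_insert]
    by_cases h : n % 4 = 1 ∨ n % 4 = 2
    · rw [if_pos h, Finset.card_insert_of_notMem (by simp), ih]; omega
    · rw [if_neg h, ih]; omega

lemma upper_bound (n : ℕ) (hn : 3 ≤ n) :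
    ∃ S : Set (Fin n), (SimpleGraph.pathGraph n).TotalDominatingSet S ∧
      S.ncard = if n % 4 = 0 then n / 2 else n / 2 + 1 := by
  classical
  refine ⟨{v : Fin n | (v.val % 4 = 1 ∨ v.val % 4 = 2) ∨
      ((n % 4 = 1 ∨ n % 4 = 2) ∧ v.val = n - 2)}, ?_, ?_⟩
  · intro v
    have hv := v.isLt
    set w : ℕ := if v.val % 4 = 2 ∨ v.val % 4 = 3 ∨ v.val + 1 = n then v.val - 1 else v.val + 1
      with hw
    have hw2 : (w = v.val - 1 ∧ (v.val % 4 = 2 ∨ v.val % 4 = 3 ∨ v.val + 1 = n)) ∨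
        (w = v.val + 1 ∧ ¬(v.val % 4 = 2 ∨ v.val % 4 = 3 ∨ v.val + 1 = n)) := by
      rw [hw]; split <;> simp_all
    refine ⟨⟨w, by omega⟩, ?_, ?_⟩
    · simp only [Set.mem_setOf_eq]; omega
    · rw [SimpleGraph.pathGraph_adj]; simp only; omega
  · have : {v : Fin n | (v.val % 4 = 1 ∨ v.val % 4 = 2) ∨
        ((n % 4 = 1 ∨ n % 4 = 2) ∧ v.val = n - 2)}.ncard
        = (Finset.univ.filter (fun v : Fin n => (v.val % 4 = 1 ∨ v.val % 4 = 2) ∨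
          ((n % 4 = 1 ∨ n % 4 = 2) ∧ v.val = n - 2))).card := by
      rw [Set.ncard_eq_toFinset_card']
      congr 1
      ext v
      simp [Set.mem_toFinset]
    rw [this]
    have hbij : (Finset.univ.filter (fun v : Fin n => (v.val % 4 = 1 ∨ v.val % 4 = 2) ∨
          ((n % 4 = 1 ∨ n % 4 = 2) ∧ v.val = n - 2))).card
        = ((Finset.range n).filter (fun v => (v % 4 = 1 ∨ v % 4 = 2) ∨
          ((n % 4 = 1 ∨ n % 4 = 2) ∧ v = n - 2))).card := by
      apply Finset.card_bij (fun v _ => v.val)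
      · intro a ha; simp only [Finset.mem_filter, Finset.mem_range] at *
        exact ⟨a.isLt, ha.2⟩
      · intro a _ b _ h; exact Fin.ext h
      · intro b hb; simp only [Finset.mem_filter, Finset.mem_range] at hb
        exact ⟨⟨b, hb.1⟩, by simp only [Finset.mem_filter, Finset.mem_univ, true_and]; exact hb.2, rfl⟩
    rw [hbij, Finset.filter_or, Finset.card_union_of_disjoint, count_mod4]
    · have h2 : ((Finset.range n).filter (fun v => (n % 4 = 1 ∨ n % 4 = 2) ∧ v = n - 2)).card
          = if n % 4 = 1 ∨ n % 4 = 2 then 1 else 0 := by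
        by_cases hc : n % 4 = 1 ∨ n % 4 = 2
        · rw [if_pos hc]
          have : (Finset.range n).filter (fun v => (n % 4 = 1 ∨ n % 4 = 2) ∧ v = n - 2)
              = {n - 2} := by
            ext v
            simp only [Finset.mem_filter, Finset.mem_range, Finset.mem_singleton]
            constructor
            · rintro ⟨_, _, h⟩; exact h
            · rintro rfl; exact ⟨by omega, hc, rfl⟩
          rw [this]; simp
        · rw [if_neg hc]
          have : (Finset.range n).filter (fun v => (n % 4 = 1 ∨ n % 4 = 2) ∧ v = n - 2)
              = ∅ := by
            ext v; simp only [Finset.mem_filter, Finset.notMem_empty, iff_false]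
            rintro ⟨_, h, _⟩; exact hc h
          rw [this]; simp
      rw [h2]
      split_ifs <;> omega
    · rw [Finset.disjoint_left]
      intro a ha ha'
      simp only [Finset.mem_filter, Finset.mem_range] at ha ha'
      omega

lemma lower_bound (n : ℕ) (hn : 3 ≤ n) (S : Set (Fin n))
    (hS : (SimpleGraph.pathGraph n).TotalDominatingSet S) :
    (if n % 4 = 0 then n / 2 else n / 2 + 1) ≤ S.ncard := by
  classical
  simp only [SimpleGraph.TotalDominatingSet] at hS
  choose f hfS hfadj using hS
  set T := S.toFinset with hT
  have hcard : S.ncard = T.card := Set.ncard_eq_toFinset_card' S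
  set g : Fin n → Fin n × Bool := fun v => (f v, decide (v.val < (f v).val)) with hg
  have hadj : ∀ v : Fin n, (v.val + 1 = (f v).val ∨ (f v).val + 1 = v.val) := fun v =>
    (SimpleGraph.pathGraph_adj).mp (hfadj v)
  have hinj : Set.InjOn g (Finset.univ : Finset (Fin n)) := by
    intro v1 _ v2 _ h
    rw [hg, Prod.ext_iff] at h
    obtain ⟨h1, h2⟩ := h
    simp only at h1 h2
    have hb := decide_eq_decide.mp h2
    have hval := congrArg Fin.val h1
    have e1 := hadj v1
    have e2 := hadj v2
    exact Fin.ext (by omega)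
  have hmaps : ∀ v ∈ (Finset.univ : Finset (Fin n)), g v ∈ T ×ˢ (Finset.univ : Finset Bool) := by
    intro v _
    rw [Finset.mem_product]
    exact ⟨Set.mem_toFinset.mpr (hfS v), Finset.mem_univ _⟩
  have h1 : n ≤ 2 * T.card := by
    have := Finset.card_le_card_of_injOn g hmaps hinj
    rw [Finset.card_univ, Fintype.card_fin, Finset.card_product, Finset.card_univ] at this
    simp only [Fintype.card_bool] at this
    omega
  rw [hcard]
  by_cases h2 : n % 4 = 2
  · rw [if_neg (by omega)]
    by_contra hlt
    push_neg at hlt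
    have hceq : 2 * T.card = n := by omega
    -- surjectivity of g onto T ×ˢ univ
    have himg : Finset.image g Finset.univ = T ×ˢ (Finset.univ : Finset Bool) := by
      apply Finset.eq_of_subset_of_card_le
      · intro x hx
        rw [Finset.mem_image] at hx
        obtain ⟨v, hv, rfl⟩ := hx
        exact hmaps v hv
      · rw [Finset.card_image_of_injOn hinj, Finset.card_univ, Fintype.card_fin,
          Finset.card_product, Finset.card_univ]
        simp only [Fintype.card_bool]
        omega
    have hsurj : ∀ u : Fin n, u ∈ S → ∀ b : Bool,
        ∃ v : Fin n, f v = u ∧ decide (v.val < u.val) = b := by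
      intro u hu b
      have hmem : (u, b) ∈ T ×ˢ (Finset.univ : Finset Bool) :=
        Finset.mem_product.mpr ⟨Set.mem_toFinset.mpr hu, Finset.mem_univ _⟩
      rw [← himg, Finset.mem_image] at hmem
      obtain ⟨v, _, hv⟩ := hmem
      rw [hg, Prod.ext_iff] at hv
      simp only at hv
      exact ⟨v, hv.1, by rw [← hv.1]; exact hv.2⟩
    set Q : ℕ → Prop := fun m => ∃ v : Fin n, v ∈ S ∧ v.val = m with hQ
    have hA : ∀ m, Q m → 1 ≤ m ∧ m + 2 ≤ n := by
      rintro m ⟨u, huS, rfl⟩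
      obtain ⟨v, hv1, hv2⟩ := hsurj u huS true
      obtain ⟨w, hw1, hw2⟩ := hsurj u huS false
      have hvlt : v.val < u.val := of_decide_eq_true hv2
      have hwlt : ¬ w.val < u.val := of_decide_eq_false hw2
      have e1 := hadj v
      have e2 := hadj w
      rw [hv1] at e1
      rw [hw1] at e2
      have := w.isLt
      omega
    have hB : ∀ m, Q m → ¬ Q (m + 2) := by
      rintro m ⟨u, huS, hum⟩ ⟨u', hu'S, hu'm⟩
      obtain ⟨v, hv1, hv2⟩ := hsurj u huS false
      obtain ⟨w, hw1, hw2⟩ := hsurj u' hu'S true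
      have hvlt : ¬ v.val < u.val := of_decide_eq_false hv2
      have hwlt : w.val < u'.val := of_decide_eq_true hw2
      have e1 := hadj v
      have e2 := hadj w
      rw [hv1] at e1
      rw [hw1] at e2
      have hvw : v = w := Fin.ext (by omega)
      have : u = u' := by rw [← hv1, ← hw1, hvw]
      have := congrArg Fin.val this
      omega
    have hC : ∀ m, m < n → ∃ u', Q u' ∧ (u' = m + 1 ∨ m = u' + 1) := by
      intro m hm
      refine ⟨(f ⟨m, hm⟩).val, ⟨f ⟨m, hm⟩, hfS _, rfl⟩, ?_⟩
      have := hadj ⟨m, hm⟩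
      simp only at this
      omega
    have claim : ∀ k, 4 * k + 2 < n → Q (4 * k + 1) ∧ Q (4 * k + 2) := by
      intro k
      induction k with
      | zero =>
        intro h
        obtain ⟨u, hu, hor⟩ := hC 0 (by omega)
        have hq1 : Q 1 := by
          rcases hor with h' | h'
          · rwa [show (1 : ℕ) = u by omega]
          · omega
        obtain ⟨u', hu', hor'⟩ := hC 1 (by omega)
        have hq2 : Q 2 := by
          rcases hor' with h' | h'
          · rwa [show (2 : ℕ) = u' by omega]
          · exact absurd (hA _ hu').1 (by omega)
        exact ⟨hq1, hq2⟩
      | succ k ih =>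
        intro h
        obtain ⟨hq1, hq2⟩ := ih (by omega)
        obtain ⟨u, hu, hor⟩ := hC (4 * k + 4) (by omega)
        have h5 : Q (4 * k + 5) := by
          rcases hor with h' | h'
          · rwa [show 4 * k + 5 = u by omega]
          · exact absurd (by rwa [show 4 * k + 1 + 2 = u by omega] : Q (4 * k + 1 + 2))
              (hB _ hq1)
        obtain ⟨u', hu', hor'⟩ := hC (4 * k + 5) (by omega)
        have h6 : Q (4 * k + 6) := by
          rcases hor' with h' | h'
          · rwa [show 4 * k + 6 = u' by omega]
          · exact absurd (by rwa [show 4 * k + 2 + 2 = u' by omega] : Q (4 * k + 2 + 2))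
              (hB _ hq2)
        refine ⟨by rwa [show 4 * (k + 1) + 1 = 4 * k + 5 by omega],
          by rwa [show 4 * (k + 1) + 2 = 4 * k + 6 by omega]⟩
    -- final contradiction
    obtain ⟨u, hu, hor⟩ := hC (n - 1) (by omega)
    have hQn2 : Q (n - 2) := by
      rcases hor with h' | h'
      · exact absurd (hA _ hu).2 (by omega)
      · rwa [show n - 2 = u by omega]
    have hc1 := (claim (n / 4 - 1) (by omega)).2
    exact hB _ hc1 (by rwa [show 4 * (n / 4 - 1) + 2 + 2 = n - 2 by omega])
  · split_ifs with h0 <;> omega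

theorem totalDomination_pathGraph (n : ℕ) (hn : 3 ≤ n) :
    (SimpleGraph.pathGraph n).totalDominationNumber =
      if n % 4 = 0 then n / 2 else n / 2 + 1 := by
  obtain ⟨S, hS, hcard⟩ := upper_bound n hn
  apply le_antisymm
  · exact Nat.sInf_le ⟨S, hS, hcard⟩
  · refine le_csInf ⟨_, S, hS, hcard⟩ ?_
    rintro k ⟨S', hS', rfl⟩
    exact lower_bound n hn S' hS'
end

section
/- If G is a graph of diameter 2, then γ_t(G) ≤ δ(G) + 1, where δ(G) is the minimum degree. -/
theorem total_domination_le_minDegree_add_one_of_diam_two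
    {V : Type*} [Fintype V] (G : SimpleGraph V) [DecidableRel G.Adj]
    (hdiam : G.diam = 2) :
    G.totalDominationNumber ≤ G.minDegree + 1 := by
  have hnt : Nontrivial V := G.nontrivial_of_diam_ne_zero (by omega)
  have hetop : G.ediam ≠ ⊤ := G.ediam_ne_top_of_diam_ne_zero (by omega)
  have hconn : G.Connected := by
    by_contra h
    exact hetop (G.ediam_eq_top_of_not_connected h)
  obtain ⟨x, hx⟩ := G.exists_minimal_degree_vertex
  -- x has a neighbor since G is connected and nontrivial
  have hxnb : ∃ w, G.Adj x w := by
    obtain ⟨y, hy⟩ := exists_ne x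
    have hd : G.dist x y ≠ 0 :=
      SimpleGraph.dist_ne_zero_iff_ne_and_reachable.mpr ⟨hy.symm, hconn.preconnected x y⟩
    obtain ⟨p, hp⟩ := SimpleGraph.exists_walk_of_dist_ne_zero hd
    cases p with
    | nil => simp at hd
    | cons h _ => exact ⟨_, h⟩
  set S : Set V := insert x (G.neighborSet x) with hS
  have hTD : G.TotalDominatingSet S := by
    intro v
    by_cases hvx : G.Adj v x
    · exact ⟨x, Set.mem_insert _ _, hvx⟩
    by_cases hveq : v = x
    · obtain ⟨w, hw⟩ := hxnb
      exact ⟨w, Set.mem_insert_of_mem _ hw, hveq ▸ hw⟩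
    · have hd0 : G.dist v x ≠ 0 :=
        SimpleGraph.dist_ne_zero_iff_ne_and_reachable.mpr ⟨hveq, hconn.preconnected v x⟩
      have hd1 : G.dist v x ≠ 1 := fun h => hvx (SimpleGraph.dist_eq_one_iff_adj.mp h)
      have hdle : G.dist v x ≤ 2 := hdiam ▸ SimpleGraph.dist_le_diam hetop
      have hd2 : G.dist v x = 2 := by omega
      obtain ⟨p, hp⟩ := SimpleGraph.exists_walk_of_dist_ne_zero hd0
      rw [hd2] at hp
      cases p with
      | nil => simp at hp
      | cons h q =>
        cases q with
        | nil => simp at hp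
        | cons h' q' =>
          cases q' with
          | nil => exact ⟨_, Set.mem_insert_of_mem _ h'.symm, h⟩
          | cons _ _ => simp [SimpleGraph.Walk.length_cons] at hp
  have hcard : S.ncard = G.minDegree + 1 := by
    have hxnot : x ∉ G.neighborSet x := by simp
    rw [hS, Set.ncard_insert_of_notMem hxnot (G.neighborSet x).toFinite]
    have : (G.neighborSet x).ncard = G.degree x := by
      rw [← SimpleGraph.card_neighborSet_eq_degree, Set.ncard_eq_toFinset_card',
        Set.toFinset_card]
    rw [this, hx]
  calc G.totalDominationNumber ≤ S.ncard := Nat.sInf_le ⟨S, hTD, rfl⟩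
    _ = G.minDegree + 1 := hcard
end

section
/- If G is a connected graph on n vertices with girth g(G) ≥ 5 and minimum degree δ(G) ≥ 2, then γ_t(G) ≤ n − ⌈g(G)/2⌉ + 1. -/
namespace TotalDomAux

open SimpleGraph Finset

variable {V : Type*} {G : SimpleGraph V}

/-- The walk along `p` from `p.getVert i` to `p.getVert (i+k)`. -/
def arcW {u v : V} (p : G.Walk u v) (i : ℕ) :
    (k : ℕ) → i + k ≤ p.length → G.Walk (p.getVert i) (p.getVert (i + k))
  | 0, _ => Walk.nil
  | k + 1, h => (arcW p i k (by omega)).concat (p.adj_getVert_succ (by omega))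

lemma arcW_length {u v : V} (p : G.Walk u v) (i : ℕ) :
    ∀ (k : ℕ) (h : i + k ≤ p.length), (arcW p i k h).length = k
  | 0, _ => rfl
  | k + 1, h => by
    rw [arcW, Walk.length_concat, arcW_length p i k]

lemma arcW_support {u v : V} (p : G.Walk u v) (i : ℕ) :
    ∀ (k : ℕ) (h : i + k ≤ p.length), ∀ y ∈ (arcW p i k h).support, y ∈ p.support
  | 0, h, y, hy => by
    simp only [arcW, Walk.support_nil, List.mem_singleton] at hy
    subst hy
    exact Walk.mem_support_iff_exists_getVert.mpr ⟨i, rfl, by omega⟩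
  | k + 1, h, y, hy => by
    rw [arcW, Walk.support_concat, List.mem_append] at hy
    rcases hy with hy | hy
    · exact arcW_support p i k (by omega) y hy
    · rw [List.mem_singleton] at hy
      subst hy
      exact Walk.mem_support_iff_exists_getVert.mpr ⟨i + (k + 1), rfl, by omega⟩

lemma girth_le_length {a : V} {w : G.Walk a a} (hw : w.IsCycle) : G.girth ≤ w.length := by
  have h1 : G.egirth ≤ (w.length : ℕ∞) := by
    refine iInf_le_of_le a (iInf_le_of_le w ?_)
    exact iInf_le_of_le hw le_rfl
  have := ENat.toNat_le_toNat h1 (by simp)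
  simpa [SimpleGraph.girth] using this

lemma getVert_eq_support_getElem {u v : V} (p : G.Walk u v) {i : ℕ} (h : i ≤ p.length) :
    p.getVert i = p.support[i]'(by rw [Walk.length_support]; omega) := by
  induction p generalizing i with
  | nil =>
    have : i = 0 := by simpa using h
    subst this
    simp
  | cons hadj q ih =>
    cases i with
    | zero => simp
    | succ i =>
      rw [Walk.getVert_cons_succ]
      have h' : i ≤ q.length := by simp only [Walk.length_cons] at h; omega
      rw [ih h']
      rfl

lemma cycle_getVert_ne {x : V} {c : G.Walk x x} (hc : c.IsCycle) {i j : ℕ}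
    (hij : i < j) (hj : j < c.length) : c.getVert i ≠ c.getVert j := by
  have h3 := hc.three_le_length
  have htail : c.support.tail.Nodup := hc.support_nodup
  have hslen : c.support.length = c.length + 1 := c.length_support
  have htlen : c.support.tail.length = c.length := by
    rw [List.length_tail, hslen]
    omega
  -- getVert of positive index lies in the tail
  have key : ∀ (m : ℕ), 1 ≤ m → (hm : m ≤ c.length) →
      c.getVert m = c.support.tail[m - 1]'(by omega) := by
    intro m hm1 hm
    obtain ⟨m', rfl⟩ : ∃ m', m = m' + 1 := ⟨m - 1, by omega⟩
    simp only [Nat.add_sub_cancel]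
    rw [getVert_eq_support_getElem c hm, List.getElem_tail]
  -- also getVert 0 = x equals the last entry of the tail
  have hlast : c.getVert 0 = c.support.tail[c.length - 1]'(by omega) := by
    have h := key c.length (by omega) le_rfl
    rw [c.getVert_length] at h
    rw [Walk.getVert_zero]
    exact h
  intro heq
  by_cases hi0 : i = 0
  · subst hi0
    rw [hlast, key j (by omega) (by omega)] at heq
    have := (htail.getElem_inj_iff (hi := by omega) (hj := by omega)).mp heq
    omega
  · rw [key i (by omega) (by omega), key j (by omega) (by omega)] at heq
    have := (htail.getElem_inj_iff (hi := by omega) (hj := by omega)).mp heq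
    omega

/-- If a vertex `u` off a walk is adjacent to both ends of a short path lying inside the
walk's support, we get a short cycle. -/
lemma short_cycle [DecidableEq V] {u a b : V} (hab : a ≠ b) (h1 : G.Adj u a) (h2 : G.Adj u b)
    (w : G.Walk a b) (hu : u ∉ w.support) (hlen : w.length + 2 < G.girth) : False := by
  set p := w.bypass with hp_def
  have hp : p.IsPath := w.bypass_isPath
  have hup : u ∉ p.support := fun h => hu (w.support_bypass_subset h)
  set r : G.Walk u a := Walk.cons h2 p.reverse with hr_def
  set q : G.Walk a u := r.reverse with hq_def
  have hqpath : q.IsPath := by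
    rw [hq_def, Walk.isPath_reverse_iff, hr_def]
    refine (Walk.isPath_reverse_iff p).mpr hp |>.cons ?_
    rw [Walk.support_reverse, List.mem_reverse]
    exact hup
  have hedge : s(u, a) ∉ q.edges := by
    rw [hq_def, Walk.edges_reverse, List.mem_reverse, hr_def, Walk.edges_cons]
    intro hmem'
    rcases List.mem_cons.mp hmem' with heq | hmem
    · exact hab (Sym2.congr_right.mp heq)
    · rw [Walk.edges_reverse, List.mem_reverse] at hmem
      exact hup (p.fst_mem_support_of_mem_edges hmem)
  have hcyc : (Walk.cons h1 q).IsCycle := (Walk.cons_isCycle_iff q h1).mpr ⟨hqpath, hedge⟩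
  have hgl := girth_le_length hcyc
  have hql : q.length = p.length + 1 := by
    rw [hq_def, Walk.length_reverse, hr_def, Walk.length_cons, Walk.length_reverse]
  have hbl : p.length ≤ w.length := w.length_bypass_le
  rw [Walk.length_cons, hql] at hgl
  omega

end TotalDomAux

open TotalDomAux SimpleGraph Finset in
theorem total_domination_le_of_girth_ge_five
    {V : Type*} [Fintype V] (G : SimpleGraph V) [DecidableRel G.Adj]
    (hconn : G.Connected) (hg : 5 ≤ G.girth) (hδ : 2 ≤ G.minDegree) :
    G.totalDominationNumber ≤ Fintype.card V - (G.girth + 1) / 2 + 1 := by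
  classical
  have hne : Nonempty V := hconn.nonempty
  have hac : ¬ G.IsAcyclic := by
    intro h
    rw [h.girth_eq_zero] at hg
    omega
  obtain ⟨x, c, hc, hlen⟩ := (SimpleGraph.exists_girth_eq_length).mpr hac
  set gn := c.length with hgn
  have hg5 : 5 ≤ gn := by omega
  -- the cycle's vertex set
  set C : Finset V := c.support.toFinset with hC
  have hmemC : ∀ v, v ∈ C ↔ v ∈ c.support := fun v => List.mem_toFinset
  have htail : c.support.tail.Nodup := hc.support_nodup
  have htlen : c.support.tail.length = gn := by
    rw [List.length_tail, c.length_support]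
    omega
  have hxtail : x ∈ c.support.tail := by
    have h3 : c.support.tail[gn - 1]'(by omega) =
        c.support[gn - 1 + 1]'(by rw [Walk.length_support]; omega) :=
      List.getElem_tail _
    have h2 : c.getVert (gn - 1 + 1) =
        c.support[gn - 1 + 1]'(by rw [Walk.length_support]; omega) :=
      getVert_eq_support_getElem c (by omega)
    have h4 : c.support.tail[gn - 1]'(by omega) = x := by
      rw [h3, ← h2, show gn - 1 + 1 = gn from by omega, c.getVert_length]
    have h5 : c.support.tail[gn - 1]'(by omega) ∈ c.support.tail := List.getElem_mem _
    rwa [h4] at h5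
  have hCcard : C.card = gn := by
    rw [hC]
    conv_lhs => rw [c.support_eq_cons]
    rw [List.toFinset_cons, Finset.insert_eq_self.mpr (List.mem_toFinset.mpr hxtail),
      List.toFinset_card_of_nodup htail, htlen]
  have hgle : gn ≤ Fintype.card V := by
    rw [← hCcard]
    exact Finset.card_le_univ C
  -- claim 1 : a vertex off the cycle cannot have two neighbors on the cycle
  have claim1 : ∀ u, u ∉ c.support → ∀ i j : ℕ, i < j → j < gn →
      G.Adj u (c.getVert i) → G.Adj u (c.getVert j) → False := by
    intro u hu i j hij hj h1 h2
    have hab : c.getVert i ≠ c.getVert j := cycle_getVert_ne hc hij hj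
    by_cases hcase : j - i + 2 < gn
    · -- direct arc from i to j
      have harc : i + (j - i) ≤ c.length := by omega
      have hw : c.getVert (i + (j - i)) = c.getVert j := by
        congr 1
        omega
      refine short_cycle hab h1 h2 ((arcW c i (j - i) harc).copy rfl hw) ?_ ?_
      · intro hmem
        rw [Walk.support_copy] at hmem
        exact hu (arcW_support c i (j - i) harc u hmem)
      · rw [Walk.length_copy, arcW_length]
        omega
    · -- the other way around : from j to the end, then from the start to i
      have h1le : j + (gn - j) ≤ c.length := by omega
      have h2le : 0 + i ≤ c.length := by omega
      have e1 : c.getVert (j + (gn - j)) = c.getVert 0 := by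
        rw [show j + (gn - j) = gn from by omega]
        rw [c.getVert_length, c.getVert_zero]
      have e2 : c.getVert (0 + i) = c.getVert i := by
        congr 1
        omega
      set w2 : G.Walk (c.getVert j) (c.getVert i) :=
        ((arcW c j (gn - j) h1le).copy rfl e1).append ((arcW c 0 i h2le).copy rfl e2) with hw2
      refine short_cycle hab.symm h2 h1 w2 ?_ ?_
      · intro hmem
        rw [hw2, Walk.support_append, List.mem_append, Walk.support_copy,
          Walk.support_copy] at hmem
        rcases hmem with hmem | hmem
        · exact hu (arcW_support c j (gn - j) h1le u hmem)
        · exact hu (arcW_support c 0 i h2le u (List.mem_of_mem_tail hmem))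
      · rw [hw2, Walk.length_append, Walk.length_copy, Walk.length_copy,
          arcW_length, arcW_length]
        omega
  -- the index set and the dominating set
  set I : Finset ℕ := (Finset.range gn).filter (fun i => i % 4 < 2) with hI
  set D : Finset V := I.image c.getVert with hD
  set Sf : Finset V := (Finset.univ \ C) ∪ D with hSf
  -- S is a total dominating set
  have hTDS : G.TotalDominatingSet (↑Sf : Set V) := by
    intro v
    by_cases hv : v ∈ c.support
    · -- v is on the cycle : some vertex of D is adjacent to it
      obtain ⟨n, hnv, hn⟩ := Walk.mem_support_iff_exists_getVert.mp hv
      set j : ℕ := if n = gn then 0 else n with hj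
      have hjlt : j < gn := by
        rw [hj]
        split <;> omega
      have hjv : c.getVert j = v := by
        rw [hj]
        split
        · rename_i h
          rw [← hnv, h, c.getVert_length, c.getVert_zero]
        · exact hnv
      have hadjnext : ∀ m : ℕ, m < gn → G.Adj (c.getVert m) (c.getVert (m + 1)) :=
        fun m hm => c.adj_getVert_succ (by omega)
      have hin : ∀ i : ℕ, i < gn → i % 4 < 2 → c.getVert i ∈ (↑Sf : Set V) := by
        intro i hi hi4
        have : c.getVert i ∈ D := Finset.mem_image.mpr
          ⟨i, Finset.mem_filter.mpr ⟨Finset.mem_range.mpr hi, hi4⟩, rfl⟩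
        exact Finset.mem_coe.mpr (Finset.mem_union_right _ this)
      by_cases h1 : j + 1 < gn ∧ (j + 1) % 4 < 2
      · exact ⟨c.getVert (j + 1), hin _ h1.1 h1.2, hjv ▸ hadjnext j hjlt⟩
      · by_cases h2 : 1 ≤ j ∧ (j - 1) % 4 < 2
        · refine ⟨c.getVert (j - 1), hin _ (by omega) h2.2, ?_⟩
          have := (hadjnext (j - 1) (by omega)).symm
          rw [show j - 1 + 1 = j from by omega] at this
          exact hjv ▸ this
        · -- then j = gn - 1, use the wrap-around edge to vertex 0
          have hjeq : j = gn - 1 := by omega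
          refine ⟨c.getVert 0, hin 0 (by omega) (by omega), ?_⟩
          have := hadjnext (gn - 1) (by omega)
          rw [show gn - 1 + 1 = gn from by omega, c.getVert_length] at this
          rw [← hjv, hjeq, c.getVert_zero]
          exact this
    · -- v is off the cycle : it has a neighbor off the cycle
      have hdeg : 2 ≤ G.degree v := le_trans hδ (G.minDegree_le_degree v)
      rw [← G.card_neighborFinset_eq_degree] at hdeg
      obtain ⟨a, ha, b, hb, hab⟩ := Finset.one_lt_card.mp
        (show 1 < (G.neighborFinset v).card by omega)
      rw [mem_neighborFinset] at ha hb
      by_cases hac' : a ∈ c.support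
      · by_cases hbc : b ∈ c.support
        · -- both neighbors on the cycle : contradiction
          exfalso
          obtain ⟨na, hna, hna'⟩ := Walk.mem_support_iff_exists_getVert.mp hac'
          obtain ⟨nb, hnb, hnb'⟩ := Walk.mem_support_iff_exists_getVert.mp hbc
          set ia : ℕ := if na = gn then 0 else na with hia
          set ib : ℕ := if nb = gn then 0 else nb with hib
          have hiav : c.getVert ia = a := by
            rw [hia]; split
            · rename_i h; rw [← hna, h, c.getVert_length, c.getVert_zero]
            · exact hna
          have hibv : c.getVert ib = b := by
            rw [hib]; split
            · rename_i h; rw [← hnb, h, c.getVert_length, c.getVert_zero]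
            · exact hnb
          have hialt : ia < gn := by rw [hia]; split <;> omega
          have hiblt : ib < gn := by rw [hib]; split <;> omega
          have hne' : ia ≠ ib := by
            intro h
            exact hab (by rw [← hiav, h, hibv])
          rcases lt_or_gt_of_ne hne' with h | h
          · exact claim1 v hv ia ib h hiblt (hiav ▸ ha) (hibv ▸ hb)
          · exact claim1 v hv ib ia h hialt (hibv ▸ hb) (hiav ▸ ha)
        · exact ⟨b, Finset.mem_coe.mpr (Finset.mem_union_left _
            (Finset.mem_sdiff.mpr ⟨Finset.mem_univ b, fun hbC => hbc ((hmemC b).mp hbC)⟩)), hb⟩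
      · exact ⟨a, Finset.mem_coe.mpr (Finset.mem_union_left _
          (Finset.mem_sdiff.mpr ⟨Finset.mem_univ a, fun haC => hac' ((hmemC a).mp haC)⟩)), ha⟩
  -- cardinality bound
  have hIcard : I.card ≤ gn / 2 + 1 := by
    have : ∀ i ∈ I, i - 2 * (i / 4) ∈ Finset.range (gn / 2 + 1) := by
      intro i hi
      rw [hI, Finset.mem_filter, Finset.mem_range] at hi
      rw [Finset.mem_range]
      omega
    calc I.card ≤ (Finset.range (gn / 2 + 1)).card := by
          refine Finset.card_le_card_of_injOn (fun i => i - 2 * (i / 4)) this ?_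
          intro i hi j hj hij
          simp only [hI, Finset.coe_filter, Set.mem_setOf_eq, Finset.mem_range] at hi hj
          dsimp only at hij
          omega
      _ = gn / 2 + 1 := Finset.card_range _
  have hScard : Sf.card ≤ Fintype.card V - gn + (gn / 2 + 1) := by
    calc Sf.card ≤ (Finset.univ \ C).card + D.card := Finset.card_union_le _ _
      _ ≤ (Fintype.card V - gn) + (gn / 2 + 1) := by
          have h1 : (Finset.univ \ C).card = Fintype.card V - gn := by
            rw [Finset.card_sdiff_of_subset (Finset.subset_univ C), hCcard, Finset.card_univ]
          have h2 : D.card ≤ gn / 2 + 1 := le_trans (Finset.card_image_le) hIcard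
          omega
  -- conclude
  have hmem : Sf.card ∈ {k | ∃ S : Set V, G.TotalDominatingSet S ∧ S.ncard = k} :=
    ⟨(↑Sf : Set V), hTDS, Set.ncard_coe_finset Sf⟩
  have hfin : G.totalDominationNumber ≤ Sf.card := Nat.sInf_le hmem
  rw [hlen]
  omega
end

section
/- Let G be a bipartite graph with no isolated vertices on n vertices. Then γ_t(G) = n − Δ(G) + 1 if and only if G is a disjoint union of one star K_{1,t} (with t = Δ(G)) and r ≥ 0 copies of K_2. -/
/-- The star `K_{1,t}` with center `0` and `t` leaves. -/
def starGraph (t : ℕ) : SimpleGraph (Fin (t + 1)) where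
  Adj i j := i ≠ j ∧ (i = 0 ∨ j = 0)
  symm := ⟨fun i j h => ⟨h.1.symm, h.2.symm⟩⟩
  loopless := ⟨fun i h => h.1 rfl⟩

/-- The disjoint union of a star `K_{1,t}` and `r` copies of `K_2`. -/
def starPlusMatching (t r : ℕ) : SimpleGraph (Fin (t + 1) ⊕ Fin r × Fin 2) where
  Adj x y :=
    match x, y with
    | Sum.inl i, Sum.inl j => i ≠ j ∧ (i = 0 ∨ j = 0)
    | Sum.inr p, Sum.inr q => p.1 = q.1 ∧ p.2 ≠ q.2
    | _, _ => False
  symm := by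
    refine ⟨?_⟩
    rintro (i | p) (j | q) h
    · exact ⟨h.1.symm, h.2.symm⟩
    · exact h.elim
    · exact h.elim
    · exact ⟨h.1.symm, h.2.symm⟩
  loopless := by
    refine ⟨?_⟩
    rintro (i | p) h
    · exact h.1 rfl
    · exact h.2 rfl

open SimpleGraph

lemma tds_map {V W : Type*} {G : SimpleGraph V} {H : SimpleGraph W}
    (e : G ≃g H) {S : Set V} (hS : G.TotalDominatingSet S) :
    H.TotalDominatingSet (e '' S) := by
  intro w
  obtain ⟨u, hu, hadj⟩ := hS (e.symm w)
  refine ⟨e u, ⟨u, hu, rfl⟩, ?_⟩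
  have := e.map_adj_iff.2 hadj
  simpa using this

lemma tdn_congr {V W : Type*} {G : SimpleGraph V} {H : SimpleGraph W} (e : G ≃g H) :
    G.totalDominationNumber = H.totalDominationNumber := by
  unfold SimpleGraph.totalDominationNumber
  congr 1
  ext k
  constructor
  · rintro ⟨S, hS, rfl⟩
    exact ⟨e '' S, tds_map e hS, Set.ncard_image_of_injective _ e.toEquiv.injective⟩
  · rintro ⟨S, hS, rfl⟩
    exact ⟨e.symm '' S, tds_map e.symm hS, Set.ncard_image_of_injective _ e.symm.toEquiv.injective⟩

lemma fin2_ne_add_one (b : Fin 2) : b ≠ b + 1 := by revert b; decide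

lemma fin2_eq_of_ne_add_one {x y : Fin 2} (h : x ≠ y + 1) : x = y := by revert x y; decide

lemma spm_one_ne_zero {t : ℕ} (ht : 1 ≤ t) : (1 : Fin (t+1)) ≠ 0 := by
  simp [Fin.ext_iff, Fin.val_one']
  omega

lemma tdn_spm (t r : ℕ) (ht : 1 ≤ t) :
    (starPlusMatching t r).totalDominationNumber = 2 * r + 2 := by
  classical
  have h10 : (1 : Fin (t+1)) ≠ 0 := spm_one_ne_zero ht
  have hrange : (Set.range (Sum.inr : Fin r × Fin 2 → Fin (t+1) ⊕ Fin r × Fin 2)).ncard = 2 * r := by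
    rw [← Set.image_univ, Set.ncard_image_of_injective _ Sum.inr_injective, Set.ncard_univ]
    simp [Nat.card_eq_fintype_card]
    ring
  have hS : (starPlusMatching t r).TotalDominatingSet
      (insert (Sum.inl 0) (insert (Sum.inl 1) (Set.range Sum.inr))) := by
    rintro (i | ⟨a, b⟩)
    · by_cases hi : i = 0
      · exact ⟨Sum.inl 1, by simp, by subst hi; exact ⟨h10.symm, Or.inl rfl⟩⟩
      · exact ⟨Sum.inl 0, by simp, ⟨hi, Or.inr rfl⟩⟩
    · exact ⟨Sum.inr (a, b + 1), by simp, ⟨rfl, fin2_ne_add_one b⟩⟩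
  have hcard : (insert (Sum.inl 0) (insert (Sum.inl 1)
      (Set.range (Sum.inr : Fin r × Fin 2 → Fin (t+1) ⊕ Fin r × Fin 2)))).ncard = 2 * r + 2 := by
    rw [Set.ncard_insert_of_notMem (by simp [h10.symm]), Set.ncard_insert_of_notMem (by simp),
      hrange]
  apply le_antisymm
  · exact Nat.sInf_le ⟨_, hS, hcard⟩
  · refine le_csInf ⟨2 * r + 2, ⟨_, hS, hcard⟩⟩ ?_
    rintro k ⟨S, hSd, rfl⟩
    have hinr : ∀ p : Fin r × Fin 2, Sum.inr p ∈ S := by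
      rintro ⟨a, b⟩
      obtain ⟨u, hu, hadj⟩ := hSd (Sum.inr (a, b + 1))
      rcases u with i | ⟨a', b'⟩
      · exact hadj.elim
      · obtain ⟨h1, h2⟩ := hadj
        have h1' : a = a' := h1
        have h2' : b + 1 ≠ b' := h2
        have hb : b' = b := fin2_eq_of_ne_add_one (Ne.symm h2')
        rw [← h1', hb] at hu; exact hu
    have h0 : Sum.inl 0 ∈ S := by
      obtain ⟨u, hu, hadj⟩ := hSd (Sum.inl 1)
      rcases u with j | q
      · obtain ⟨h1, h2⟩ := hadj
        rcases h2 with h2 | h2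
        · exact absurd h2 h10
        · rw [h2] at hu; exact hu
      · exact hadj.elim
    obtain ⟨j, hj, hjS⟩ : ∃ j : Fin (t+1), j ≠ 0 ∧ Sum.inl j ∈ S := by
      obtain ⟨u, hu, hadj⟩ := hSd (Sum.inl 0)
      rcases u with j | q
      · exact ⟨j, Ne.symm hadj.1, hu⟩
      · exact hadj.elim
    have hsub : insert (Sum.inl 0) (insert (Sum.inl j)
        (Set.range (Sum.inr : Fin r × Fin 2 → Fin (t+1) ⊕ Fin r × Fin 2))) ⊆ S := by
      intro x hx
      rcases hx with rfl | hx
      · exact h0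
      rcases hx with rfl | ⟨p, rfl⟩
      · exact hjS
      · exact hinr p
    have := Set.ncard_le_ncard hsub (Set.toFinite S)
    rw [Set.ncard_insert_of_notMem (by simp [Ne.symm hj]),
      Set.ncard_insert_of_notMem (by simp), hrange] at this
    omega

lemma forward_structure {V : Type*} [Fintype V] (G : SimpleGraph V) [DecidableRel G.Adj]
    (hbip : G.Colorable 2) (hiso : ∀ v : V, ∃ u : V, G.Adj v u) (v : V)
    (hK : ∀ S : Set V, G.TotalDominatingSet S →
      Fintype.card V - G.degree v + 1 ≤ S.ncard) :
    (∀ x y, G.Adj v x → G.Adj x y → y = v) ∧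
    (∀ w, w ≠ v → ¬ G.Adj v w → ∀ y z, G.Adj w y → G.Adj w z → y = z) := by
  classical
  set N : Set V := G.neighborSet v with hNdef
  set P : Set V := insert v N with hPdef
  set R : Set V := Pᶜ with hRdef
  have hvN : v ∉ N := fun h => G.loopless.irrefl v h
  have hNn : N.ncard = G.degree v := by
    rw [← SimpleGraph.card_neighborFinset_eq_degree, ← Set.ncard_coe_finset,
      SimpleGraph.neighborFinset_def, Set.coe_toFinset]
  have hPn : P.ncard = G.degree v + 1 := by
    rw [hPdef, Set.ncard_insert_of_notMem hvN, hNn]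
  have hPR : P.ncard + R.ncard = Fintype.card V := by
    have := Set.ncard_add_ncard_compl P
    rwa [Nat.card_eq_fintype_card] at this
  have hmemR : ∀ w, w ∈ R ↔ (w ≠ v ∧ ¬ G.Adj v w) := by
    intro w
    rw [hRdef, Set.mem_compl_iff, hPdef, Set.mem_insert_iff, not_or]
    simp [hNdef]
  have hNind : ∀ x y, G.Adj v x → G.Adj v y → ¬ G.Adj x y := by
    obtain ⟨c⟩ := hbip
    intro x y h1 h2 h3
    have e1 := Fin.val_ne_of_ne (c.valid h1)
    have e2 := Fin.val_ne_of_ne (c.valid h2)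
    have e3 := Fin.val_ne_of_ne (c.valid h3)
    have l1 : (c v).val < 2 := (c v).isLt
    have l2 : (c x).val < 2 := (c x).isLt
    have l3 : (c y).val < 2 := (c y).isLt
    omega
  -- Step 1: every vertex of R has a neighbor in R
  have step1 : ∀ w ∈ R, ∃ z ∈ R, G.Adj w z := by
    by_contra hc
    push_neg at hc
    obtain ⟨w₀, hw₀R, hw₀⟩ := hc
    set B : Set V := {w | w ∈ R ∧ ∀ z, G.Adj w z → z ∉ R} with hBdef
    have hw₀B : w₀ ∈ B := ⟨hw₀R, fun z hz hzR => hw₀ z hzR hz⟩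
    have hBR : B ⊆ R := fun b hb => hb.1
    set f : V → V := fun b => Classical.choose (hiso b) with hfdef
    have hfadj : ∀ b, G.Adj b (f b) := fun b => Classical.choose_spec (hiso b)
    have hfN : ∀ b ∈ B, G.Adj v (f b) := by
      intro b hb
      have hnR : f b ∉ R := hb.2 _ (hfadj b)
      rw [hmemR] at hnR
      push_neg at hnR
      by_cases hfv : f b = v
      · exact absurd ((hfv ▸ hfadj b).symm) (((hmemR b).1 (hBR hb)).2)
      · exact hnR hfv
    set S : Set V := insert v ((R \ B) ∪ (f '' B)) with hSdef
    have hTDS : G.TotalDominatingSet S := by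
      intro x
      by_cases hxv : x = v
      · exact ⟨f w₀, Set.mem_insert_of_mem _ (Or.inr ⟨w₀, hw₀B, rfl⟩), hxv ▸ hfN w₀ hw₀B⟩
      by_cases hxadj : G.Adj v x
      · exact ⟨v, Set.mem_insert _ _, hxadj.symm⟩
      have hxR : x ∈ R := (hmemR x).2 ⟨hxv, hxadj⟩
      by_cases hxB : x ∈ B
      · exact ⟨f x, Set.mem_insert_of_mem _ (Or.inr ⟨x, hxB, rfl⟩), hfadj x⟩
      · have hex : ∃ z, G.Adj x z ∧ z ∈ R := by
          by_contra hno
          push_neg at hno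
          exact hxB ⟨hxR, fun z hz => hno z hz⟩
        obtain ⟨z, hxz, hzR⟩ := hex
        have hzB : z ∉ B := fun hzB => (hzB.2 x hxz.symm) hxR
        exact ⟨z, Set.mem_insert_of_mem _ (Or.inl ⟨hzR, hzB⟩), hxz⟩
    have h1 := Set.ncard_insert_le v ((R \ B) ∪ (f '' B))
    have h2 := Set.ncard_union_le (R \ B) (f '' B)
    have h3 : (R \ B).ncard = R.ncard - B.ncard := Set.ncard_diff hBR
    have h4 : (f '' B).ncard ≤ B.ncard := Set.ncard_image_le
    have h5 : B.ncard ≤ R.ncard := Set.ncard_le_ncard hBR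
    have h6 := hK S hTDS
    rw [hSdef] at h6
    omega
  -- Step 2: neighbors of neighbors of v are v
  have step2 : ∀ x y, G.Adj v x → G.Adj x y → y = v := by
    intro x₀ y₀ hvx hxy
    by_contra hyv
    have hy₀R : y₀ ∈ R := (hmemR y₀).2 ⟨hyv, fun hadj => hNind x₀ y₀ hvx hadj hxy⟩
    set C : Set V := {c | c ∈ R ∧ c ≠ y₀ ∧ ¬ G.Adj c x₀ ∧ ∀ z, G.Adj c z → z ∈ R → z = y₀}
      with hCdef
    have hCR : C ⊆ R := fun c hc => hc.1
    have hCy : ∀ c ∈ C, G.Adj c y₀ := by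
      intro c hc
      obtain ⟨z, hzR, hcz⟩ := step1 c hc.1
      have := hc.2.2.2 z hcz hzR
      rwa [this] at hcz
    have hy₀C : y₀ ∉ C := fun h => h.2.1 rfl
    by_cases hCne : C.Nonempty
    · set S : Set V := insert v (insert x₀ (R \ C)) with hSdef
      have hTDS : G.TotalDominatingSet S := by
        intro x
        by_cases hxv : x = v
        · exact ⟨x₀, Set.mem_insert_of_mem _ (Set.mem_insert _ _), hxv ▸ hvx⟩
        by_cases hxadj : G.Adj v x
        · exact ⟨v, Set.mem_insert _ _, hxadj.symm⟩
        have hxR : x ∈ R := (hmemR x).2 ⟨hxv, hxadj⟩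
        by_cases hxC : x ∈ C
        · exact ⟨y₀, Set.mem_insert_of_mem _ (Set.mem_insert_of_mem _ ⟨hy₀R, hy₀C⟩), hCy x hxC⟩
        by_cases hxy₀ : x = y₀
        · exact ⟨x₀, Set.mem_insert_of_mem _ (Set.mem_insert _ _), hxy₀ ▸ hxy.symm⟩
        by_cases hxx₀ : G.Adj x x₀
        · exact ⟨x₀, Set.mem_insert_of_mem _ (Set.mem_insert _ _), hxx₀⟩
        rw [hCdef, Set.mem_setOf_eq] at hxC
        push_neg at hxC
        obtain ⟨z, hxz, hzR, hzy₀⟩ := hxC hxR hxy₀ hxx₀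
        have hzC : z ∉ C := fun hzC => hxy₀ (hzC.2.2.2 x hxz.symm hxR)
        exact ⟨z, Set.mem_insert_of_mem _ (Set.mem_insert_of_mem _ ⟨hzR, hzC⟩), hxz⟩
      have h1 := Set.ncard_insert_le v (insert x₀ (R \ C))
      have h2 := Set.ncard_insert_le x₀ (R \ C)
      have h3 : (R \ C).ncard = R.ncard - C.ncard := Set.ncard_diff hCR
      have h4 : C.ncard ≤ R.ncard := Set.ncard_le_ncard hCR
      have h5 : 0 < C.ncard := (Set.ncard_pos (Set.toFinite C)).2 hCne
      have h6 := hK S hTDS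
      rw [hSdef] at h6
      omega
    · rw [Set.not_nonempty_iff_eq_empty] at hCne
      set S : Set V := insert v (insert x₀ (R \ {y₀})) with hSdef
      have hTDS : G.TotalDominatingSet S := by
        intro x
        by_cases hxv : x = v
        · exact ⟨x₀, Set.mem_insert_of_mem _ (Set.mem_insert _ _), hxv ▸ hvx⟩
        by_cases hxadj : G.Adj v x
        · exact ⟨v, Set.mem_insert _ _, hxadj.symm⟩
        have hxR : x ∈ R := (hmemR x).2 ⟨hxv, hxadj⟩
        by_cases hxy₀ : x = y₀
        · exact ⟨x₀, Set.mem_insert_of_mem _ (Set.mem_insert _ _), hxy₀ ▸ hxy.symm⟩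
        by_cases hxx₀ : G.Adj x x₀
        · exact ⟨x₀, Set.mem_insert_of_mem _ (Set.mem_insert _ _), hxx₀⟩
        have hxC : x ∉ C := by rw [hCne]; exact Set.notMem_empty x
        rw [hCdef, Set.mem_setOf_eq] at hxC
        push_neg at hxC
        obtain ⟨z, hxz, hzR, hzy₀⟩ := hxC hxR hxy₀ hxx₀
        exact ⟨z, Set.mem_insert_of_mem _ (Set.mem_insert_of_mem _ ⟨hzR, hzy₀⟩), hxz⟩
      have h1 := Set.ncard_insert_le v (insert x₀ (R \ {y₀}))
      have h2 := Set.ncard_insert_le x₀ (R \ {y₀})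
      have h3 : (R \ {y₀}).ncard = R.ncard - 1 := by
        rw [Set.ncard_diff (Set.singleton_subset_iff.2 hy₀R), Set.ncard_singleton]
      have h4 : 1 ≤ R.ncard := by
        have := Set.ncard_le_ncard (Set.singleton_subset_iff.2 hy₀R) (Set.toFinite R)
        simpa using this
      have h6 := hK S hTDS
      rw [hSdef] at h6
      omega
  -- Step 3: vertices in R have a unique neighbor
  have step3 : ∀ w, w ∈ R → ∀ y z, G.Adj w y → G.Adj w z → y = z := by
    intro w hwR y z hwy hwz
    by_contra hyz
    obtain ⟨u₀, hu₀⟩ := hiso v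
    have hRnbr : ∀ a b, a ∈ R → G.Adj a b → b ∈ R := by
      intro a b ha hab
      rw [hmemR]
      constructor
      · rintro rfl
        exact ((hmemR a).1 ha).2 hab.symm
      · intro hvb
        exact ((hmemR a).1 ha).1 (step2 b a hvb hab.symm)
    have hyR : y ∈ R := hRnbr w y hwR hwy
    have hzR : z ∈ R := hRnbr w z hwR hwz
    set C : Set V := {c | c ∈ R ∧ c ≠ w ∧ ∀ x, G.Adj c x → x = w} with hCdef
    have hCR : C ⊆ R := fun c hc => hc.1
    have hCw : ∀ c ∈ C, G.Adj c w := by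
      intro c hc
      obtain ⟨x, hx⟩ := hiso c
      have := hc.2.2 x hx
      rwa [this] at hx
    have hwC : w ∉ C := fun h => h.2.1 rfl
    have hgen : ∀ x, x ∈ R → x ≠ w → x ∉ C → ∃ x', G.Adj x x' ∧ x' ∈ R ∧ x' ∉ C := by
      intro x hxR hxw hxC
      rw [hCdef, Set.mem_setOf_eq] at hxC
      push_neg at hxC
      obtain ⟨x', hxx', hx'w⟩ := hxC hxR hxw
      have hx'R : x' ∈ R := hRnbr x x' hxR hxx'
      have hx'C : x' ∉ C := fun hc => hxw (hc.2.2 x hxx'.symm)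
      exact ⟨x', hxx', hx'R, hx'C⟩
    by_cases hyzC : y ∈ C ∧ z ∈ C
    · -- both private neighbors: C has at least 2 elements
      set S : Set V := insert v (insert u₀ (insert y (R \ C))) with hSdef
      have hTDS : G.TotalDominatingSet S := by
        intro x
        by_cases hxv : x = v
        · exact ⟨u₀, Set.mem_insert_of_mem _ (Set.mem_insert _ _), hxv ▸ hu₀⟩
        by_cases hxadj : G.Adj v x
        · exact ⟨v, Set.mem_insert _ _, hxadj.symm⟩
        have hxR : x ∈ R := (hmemR x).2 ⟨hxv, hxadj⟩
        by_cases hxw : x = w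
        · exact ⟨y, Set.mem_insert_of_mem _ (Set.mem_insert_of_mem _ (Set.mem_insert _ _)),
            hxw ▸ hwy⟩
        by_cases hxC : x ∈ C
        · exact ⟨w, Set.mem_insert_of_mem _ (Set.mem_insert_of_mem _
            (Set.mem_insert_of_mem _ ⟨hwR, hwC⟩)), hCw x hxC⟩
        obtain ⟨x', hxx', hx'R, hx'C⟩ := hgen x hxR hxw hxC
        exact ⟨x', Set.mem_insert_of_mem _ (Set.mem_insert_of_mem _
          (Set.mem_insert_of_mem _ ⟨hx'R, hx'C⟩)), hxx'⟩
      have h1 := Set.ncard_insert_le v (insert u₀ (insert y (R \ C)))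
      have h2 := Set.ncard_insert_le u₀ (insert y (R \ C))
      have h2b := Set.ncard_insert_le y (R \ C)
      have h3 : (R \ C).ncard = R.ncard - C.ncard := Set.ncard_diff hCR
      have h4 : C.ncard ≤ R.ncard := Set.ncard_le_ncard hCR
      have h5 : 2 ≤ C.ncard := by
        have hsub : {y, z} ⊆ C := by
          intro a ha
          rcases ha with rfl | ha
          · exact hyzC.1
          · rw [Set.mem_singleton_iff] at ha
            exact ha ▸ hyzC.2
        have := Set.ncard_le_ncard hsub (Set.toFinite C)
        rwa [Set.ncard_pair hyz] at this
      have h6 := hK S hTDS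
      rw [hSdef] at h6
      omega
    · -- some neighbor of w is not in C
      have hy' : ∃ y', G.Adj w y' ∧ y' ∈ R ∧ y' ∉ C := by
        by_cases h : y ∈ C
        · exact ⟨z, hwz, hzR, fun hz => hyzC ⟨h, hz⟩⟩
        · exact ⟨y, hwy, hyR, h⟩
      obtain ⟨y', hwy', hy'R, hy'C⟩ := hy'
      by_cases hCne : C.Nonempty
      · set S : Set V := insert v (insert u₀ (R \ C)) with hSdef
        have hTDS : G.TotalDominatingSet S := by
          intro x
          by_cases hxv : x = v
          · exact ⟨u₀, Set.mem_insert_of_mem _ (Set.mem_insert _ _), hxv ▸ hu₀⟩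
          by_cases hxadj : G.Adj v x
          · exact ⟨v, Set.mem_insert _ _, hxadj.symm⟩
          have hxR : x ∈ R := (hmemR x).2 ⟨hxv, hxadj⟩
          by_cases hxw : x = w
          · exact ⟨y', Set.mem_insert_of_mem _ (Set.mem_insert_of_mem _ ⟨hy'R, hy'C⟩),
              hxw ▸ hwy'⟩
          by_cases hxC : x ∈ C
          · exact ⟨w, Set.mem_insert_of_mem _ (Set.mem_insert_of_mem _ ⟨hwR, hwC⟩), hCw x hxC⟩
          obtain ⟨x', hxx', hx'R, hx'C⟩ := hgen x hxR hxw hxC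
          exact ⟨x', Set.mem_insert_of_mem _ (Set.mem_insert_of_mem _ ⟨hx'R, hx'C⟩), hxx'⟩
        have h1 := Set.ncard_insert_le v (insert u₀ (R \ C))
        have h2 := Set.ncard_insert_le u₀ (R \ C)
        have h3 : (R \ C).ncard = R.ncard - C.ncard := Set.ncard_diff hCR
        have h4 : C.ncard ≤ R.ncard := Set.ncard_le_ncard hCR
        have h5 : 0 < C.ncard := (Set.ncard_pos (Set.toFinite C)).2 hCne
        have h6 := hK S hTDS
        rw [hSdef] at h6
        omega
      · rw [Set.not_nonempty_iff_eq_empty] at hCne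
        set S : Set V := insert v (insert u₀ (R \ {w})) with hSdef
        have hTDS : G.TotalDominatingSet S := by
          intro x
          by_cases hxv : x = v
          · exact ⟨u₀, Set.mem_insert_of_mem _ (Set.mem_insert _ _), hxv ▸ hu₀⟩
          by_cases hxadj : G.Adj v x
          · exact ⟨v, Set.mem_insert _ _, hxadj.symm⟩
          have hxR : x ∈ R := (hmemR x).2 ⟨hxv, hxadj⟩
          by_cases hxw : x = w
          · exact ⟨y', Set.mem_insert_of_mem _ (Set.mem_insert_of_mem _ ⟨hy'R, hwy'.ne'⟩),
              hxw ▸ hwy'⟩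
          have hxC : x ∉ C := by rw [hCne]; exact Set.notMem_empty x
          rw [hCdef, Set.mem_setOf_eq] at hxC
          push_neg at hxC
          obtain ⟨x', hxx', hx'w⟩ := hxC hxR hxw
          have hx'R : x' ∈ R := hRnbr x x' hxR hxx'
          exact ⟨x', Set.mem_insert_of_mem _ (Set.mem_insert_of_mem _ ⟨hx'R, hx'w⟩), hxx'⟩
        have h1 := Set.ncard_insert_le v (insert u₀ (R \ {w}))
        have h2 := Set.ncard_insert_le u₀ (R \ {w})
        have h3 : (R \ {w}).ncard = R.ncard - 1 := by
          rw [Set.ncard_diff (Set.singleton_subset_iff.2 hwR), Set.ncard_singleton]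
        have h4 : 1 ≤ R.ncard := by
          have := Set.ncard_le_ncard (Set.singleton_subset_iff.2 hwR) (Set.toFinite R)
          simpa using this
        have h6 := hK S hTDS
        rw [hSdef] at h6
        omega
  exact ⟨step2, fun w h1 h2 => step3 w ((hmemR w).2 ⟨h1, h2⟩)⟩

lemma build_iso {V : Type*} [Fintype V] (G : SimpleGraph V) [DecidableRel G.Adj]
    (hiso : ∀ v : V, ∃ u : V, G.Adj v u) (v : V)
    (hA : ∀ x y, G.Adj v x → G.Adj x y → y = v)
    (hB : ∀ w, w ≠ v → ¬ G.Adj v w → ∀ y z, G.Adj w y → G.Adj w z → y = z) :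
    ∃ r : ℕ, Nonempty (G ≃g starPlusMatching (G.degree v) r) := by
  classical
  set P : Set V := insert v (G.neighborSet v) with hPdef
  have hmemP : ∀ w, w ∈ P ↔ (w = v ∨ G.Adj v w) := by
    intro w
    rw [hPdef, Set.mem_insert_iff]
    simp
  -- T : vertices outside the star
  let T : Type _ := {a : V // a ∉ P}
  have hTv : ∀ a : T, (a : V) ≠ v := by
    intro a h
    exact a.2 ((hmemP _).2 (Or.inl h))
  have hTadj : ∀ a : T, ¬ G.Adj v (a : V) := by
    intro a h
    exact a.2 ((hmemP _).2 (Or.inr h))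
  have hTnbr : ∀ (a : T) (b : V), G.Adj (a : V) b → b ∉ P := by
    intro a b hab hbP
    rcases (hmemP b).1 hbP with rfl | hb
    · exact hTadj a hab.symm
    · exact hTv a (hA b (a : V) hb hab.symm)
  have huniq : ∀ (a : T) (y z : V), G.Adj (a : V) y → G.Adj (a : V) z → y = z :=
    fun a => hB (a : V) (hTv a) (hTadj a)
  -- setoid pairing each vertex of T with its unique neighbor
  let s : Setoid T := ⟨fun a b => a = b ∨ G.Adj (a : V) (b : V), by
    constructor
    · exact fun a => Or.inl rfl
    · rintro a b (rfl | h)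
      · exact Or.inl rfl
      · exact Or.inr h.symm
    · rintro a b c (rfl | hab) (rfl | hbc)
      · exact Or.inl rfl
      · exact Or.inr hbc
      · exact Or.inr hab
      · exact Or.inl (Subtype.ext (huniq b _ _ hab.symm hbc))⟩
  have hpartner : ∀ a : T, ∃ b : T, G.Adj (a : V) (b : V) := by
    intro a
    obtain ⟨x, hx⟩ := hiso (a : V)
    exact ⟨⟨x, hTnbr a x hx⟩, hx⟩
  have hfib : ∀ q : Quotient s, Fintype.card {x : T // Quotient.mk s x = q} = 2 := by
    intro q
    obtain ⟨a, rfl⟩ := Quotient.exists_rep q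
    obtain ⟨b, hab⟩ := hpartner a
    have hne : a ≠ b := fun h => G.loopless.irrefl _ (h ▸ hab)
    rw [← Finset.card_univ, Finset.card_eq_two]
    refine ⟨⟨a, rfl⟩, ⟨b, Quotient.sound (Or.inr hab.symm)⟩, ?_, ?_⟩
    · intro h
      exact hne (congrArg Subtype.val h)
    · ext ⟨x, hx⟩
      simp only [Finset.mem_univ, Finset.mem_insert, Finset.mem_singleton, true_iff]
      have hxa : x = a ∨ G.Adj (x : V) (a : V) := Quotient.exact hx
      rcases hxa with rfl | hxa
      · exact Or.inl rfl
      · have : (x : V) = (b : V) := huniq a _ _ hxa.symm hab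
        exact Or.inr (Subtype.ext (Subtype.ext this))
  let r := Fintype.card (Quotient s)
  let eQ : Quotient s ≃ Fin r := Fintype.equivFin _
  let E : T ≃ Fin r × Fin 2 :=
    (Equiv.sigmaFiberEquiv (fun x : T => Quotient.mk s x)).symm.trans
      ((Equiv.sigmaCongrRight (fun q => Fintype.equivFinOfCardEq (hfib q))).trans
        ((Equiv.sigmaEquivProd (Quotient s) (Fin 2)).trans
          (Equiv.prodCongr eQ (Equiv.refl (Fin 2)))))
  have hE1 : ∀ x : T, (E x).1 = eQ (Quotient.mk s x) := fun x => rfl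
  have hEadj : ∀ a b : T, G.Adj (a : V) (b : V) ↔
      ((E a).1 = (E b).1 ∧ (E a).2 ≠ (E b).2) := by
    intro a b
    constructor
    · intro h
      have hcl : Quotient.mk s a = Quotient.mk s b := Quotient.sound (Or.inr h)
      have h1 : (E a).1 = (E b).1 := by rw [hE1, hE1, hcl]
      have hne : a ≠ b := fun hh => G.loopless.irrefl _ (hh ▸ h)
      exact ⟨h1, fun h2 => (fun hh => hne (E.injective hh)) (Prod.ext h1 h2)⟩
    · rintro ⟨h1, h2⟩
      rw [hE1, hE1] at h1
      have hab : a = b ∨ G.Adj (a : V) (b : V) := Quotient.exact (eQ.injective h1)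
      rcases hab with rfl | hab
      · exact absurd rfl h2
      · exact hab
  -- star part
  have hNn : (G.neighborSet v).ncard = G.degree v := by
    rw [← SimpleGraph.card_neighborFinset_eq_degree, ← Set.ncard_coe_finset,
      SimpleGraph.neighborFinset_def, Set.coe_toFinset]
  have hvN : v ∉ G.neighborSet v := fun h => G.loopless.irrefl v h
  have hPcard : Fintype.card P = G.degree v + 1 := by
    rw [← Nat.card_eq_fintype_card, Nat.card_coe_set_eq, hPdef,
      Set.ncard_insert_of_notMem hvN, hNn]
  let e0 : P ≃ Fin (G.degree v + 1) := Fintype.equivFinOfCardEq hPcard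
  let vP : P := ⟨v, Set.mem_insert _ _⟩
  let e1 : P ≃ Fin (G.degree v + 1) := e0.trans (Equiv.swap (e0 vP) 0)
  have he1v : e1 vP = 0 := by simp [e1, Equiv.swap_apply_left]
  have he10 : ∀ x : P, e1 x = 0 ↔ x = vP :=
    fun x => ⟨fun h => e1.injective (h.trans he1v.symm), fun h => h ▸ he1v⟩
  have hPadj : ∀ a b : P, G.Adj (a : V) (b : V) ↔ (a ≠ b ∧ (a = vP ∨ b = vP)) := by
    intro a b
    constructor
    · intro h
      refine ⟨fun hh => G.loopless.irrefl _ ((congrArg Subtype.val hh) ▸ h), ?_⟩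
      by_contra hor
      push_neg at hor
      obtain ⟨ha, hb⟩ := hor
      have haN : G.Adj v (a : V) := by
        rcases (hmemP _).1 a.2 with h' | h'
        · exact absurd (Subtype.ext h') ha
        · exact h'
      exact hb (Subtype.ext (hA (a : V) (b : V) haN h))
    · rintro ⟨hne, (rfl | rfl)⟩
      · rcases (hmemP _).1 b.2 with h' | h'
        · exact absurd (Subtype.ext h').symm hne
        · exact h'
      · rcases (hmemP _).1 a.2 with h' | h'
        · exact absurd (Subtype.ext h') hne
        · exact h'.symm
  -- assemble
  let Φ : V ≃ (Fin (G.degree v + 1) ⊕ Fin r × Fin 2) :=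
    (Equiv.sumCompl (fun a => a ∈ P)).symm.trans (Equiv.sumCongr e1 E)
  refine ⟨r, ⟨⟨Φ, ?_⟩⟩⟩
  intro a b
  show (starPlusMatching (G.degree v) r).Adj (Φ a) (Φ b) ↔ G.Adj a b
  by_cases ha : a ∈ P <;> by_cases hb : b ∈ P
  · rw [show Φ a = Sum.inl (e1 ⟨a, ha⟩) by
        simp [Φ, Equiv.sumCompl_symm_apply_of_pos ha],
      show Φ b = Sum.inl (e1 ⟨b, hb⟩) by
        simp [Φ, Equiv.sumCompl_symm_apply_of_pos hb]]
    show (e1 ⟨a, ha⟩ ≠ e1 ⟨b, hb⟩ ∧ (e1 ⟨a, ha⟩ = 0 ∨ e1 ⟨b, hb⟩ = 0)) ↔ G.Adj a b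
    rw [hPadj ⟨a, ha⟩ ⟨b, hb⟩]
    constructor
    · rintro ⟨h1, h2⟩
      refine ⟨fun hh => h1 (congrArg e1 hh), ?_⟩
      rcases h2 with h2 | h2
      · exact Or.inl ((he10 _).1 h2)
      · exact Or.inr ((he10 _).1 h2)
    · rintro ⟨h1, h2⟩
      refine ⟨fun hh => h1 (e1.injective hh), ?_⟩
      rcases h2 with h2 | h2
      · exact Or.inl ((he10 _).2 h2)
      · exact Or.inr ((he10 _).2 h2)
  · rw [show Φ a = Sum.inl (e1 ⟨a, ha⟩) by
        simp [Φ, Equiv.sumCompl_symm_apply_of_pos ha],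
      show Φ b = Sum.inr (E ⟨b, hb⟩) by
        simp [Φ, Equiv.sumCompl_symm_apply_of_neg hb]]
    have hnadj : ¬ G.Adj a b := fun h => hTnbr ⟨b, hb⟩ a h.symm ha
    simp only [iff_iff_implies_and_implies]
    exact ⟨fun h => h.elim, fun h => absurd h hnadj⟩
  · rw [show Φ a = Sum.inr (E ⟨a, ha⟩) by
        simp [Φ, Equiv.sumCompl_symm_apply_of_neg ha],
      show Φ b = Sum.inl (e1 ⟨b, hb⟩) by
        simp [Φ, Equiv.sumCompl_symm_apply_of_pos hb]]
    have hnadj : ¬ G.Adj a b := fun h => hTnbr ⟨a, ha⟩ b h hb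
    simp only [iff_iff_implies_and_implies]
    exact ⟨fun h => h.elim, fun h => absurd h hnadj⟩
  · rw [show Φ a = Sum.inr (E ⟨a, ha⟩) by
        simp [Φ, Equiv.sumCompl_symm_apply_of_neg ha],
      show Φ b = Sum.inr (E ⟨b, hb⟩) by
        simp [Φ, Equiv.sumCompl_symm_apply_of_neg hb]]
    show ((E ⟨a, ha⟩).1 = (E ⟨b, hb⟩).1 ∧ (E ⟨a, ha⟩).2 ≠ (E ⟨b, hb⟩).2) ↔ G.Adj a b
    exact (hEadj ⟨a, ha⟩ ⟨b, hb⟩).symm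

theorem bipartite_total_domination_eq_iff
    {V : Type*} [Fintype V] (G : SimpleGraph V) [DecidableRel G.Adj]
    (hbip : G.Colorable 2) (hiso : ∀ v : V, ∃ u : V, G.Adj v u) :
    G.totalDominationNumber = Fintype.card V - G.maxDegree + 1 ↔
      ∃ r : ℕ, Nonempty (G ≃g starPlusMatching G.maxDegree r) := by
  constructor
  · intro h
    have hne : Nonempty V := by
      by_contra h'
      rw [not_nonempty_iff] at h'
      have h0 : G.totalDominationNumber ≤ 0 :=
        Nat.sInf_le ⟨∅, fun x => (h'.false x).elim, by simp⟩
      have hc : Fintype.card V = 0 := Fintype.card_eq_zero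
      omega
    obtain ⟨v, hv⟩ := G.exists_maximal_degree_vertex
    have hK : ∀ S : Set V, G.TotalDominatingSet S →
        Fintype.card V - G.degree v + 1 ≤ S.ncard := by
      intro S hS
      have h2 : G.totalDominationNumber ≤ S.ncard := Nat.sInf_le ⟨S, hS, rfl⟩
      rw [h, hv] at h2
      exact h2
    obtain ⟨hA, hB⟩ := forward_structure G hbip hiso v hK
    obtain ⟨r, ⟨e⟩⟩ := build_iso G hiso v hA hB
    refine ⟨r, ?_⟩
    rw [hv]
    exact ⟨e⟩
  · rintro ⟨r, ⟨e⟩⟩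
    have hcard : Fintype.card V = (G.maxDegree + 1) + 2 * r := by
      rw [Fintype.card_congr e.toEquiv]
      simp [Fintype.card_sum, Fintype.card_prod]
      ring
    have hne : Nonempty V := by
      rw [← Fintype.card_pos_iff]
      omega
    have hΔ : 1 ≤ G.maxDegree := by
      obtain ⟨v⟩ := hne
      obtain ⟨u, hu⟩ := hiso v
      have h1 : 1 ≤ G.degree v := by
        rw [← SimpleGraph.card_neighborFinset_eq_degree]
        exact Finset.card_pos.2 ⟨u, (SimpleGraph.mem_neighborFinset G v u).2 hu⟩
      exact le_trans h1 (G.degree_le_maxDegree v)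
    rw [tdn_congr e, tdn_spm _ r hΔ, hcard]
    omega
end

section
/- For integers n and d with d ≥ 3 and n ≥ 4d − 2, the circular complete graph K_{n,d} satisfies γ_t(K_{n,d}) = 2; in fact {v_0, v_{2d−1}} is a total dominating set. -/
/-- The circular complete graph `K_{n,d}`: vertices `0, …, n-1`, with `i ~ j` iff
`d ≤ |i - j| ≤ n - d`. -/
def circularComplete (n d : ℕ) : SimpleGraph (Fin n) where
  Adj i j := i ≠ j ∧ d ≤ max i.val j.val - min i.val j.val ∧
      max i.val j.val - min i.val j.val ≤ n - d
  symm := by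
    constructor
    intro i j h
    obtain ⟨h1, h2, h3⟩ := h
    exact ⟨h1.symm, by omega, by omega⟩
  loopless := ⟨fun i h => h.1 rfl⟩

theorem totalDomination_circularComplete_eq_two (n d : ℕ) (hd : 3 ≤ d)
    (hn : 4 * d - 2 ≤ n) :
    (circularComplete n d).totalDominationNumber = 2 ∧
      (circularComplete n d).TotalDominatingSet
        {(⟨0, by omega⟩ : Fin n), ⟨2 * d - 1, by omega⟩} := by
  have htds : (circularComplete n d).TotalDominatingSet
      {(⟨0, by omega⟩ : Fin n), ⟨2 * d - 1, by omega⟩} := by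
    intro v
    by_cases h : d ≤ v.val ∧ v.val ≤ n - d
    · refine ⟨⟨0, by omega⟩, Or.inl rfl, show _ ∧ _ ∧ _ from ⟨?_, ?_, ?_⟩⟩
      · intro hv; have := congrArg Fin.val hv; simp at this; omega
      · simp; omega
      · simp; omega
    · refine ⟨⟨2 * d - 1, by omega⟩, Or.inr rfl, show _ ∧ _ ∧ _ from ⟨?_, ?_, ?_⟩⟩
      · intro hv; have := congrArg Fin.val hv; simp at this; omega
      · simp; omega
      · simp; omega
  refine ⟨?_, htds⟩
  have hne : (⟨0, by omega⟩ : Fin n) ≠ ⟨2 * d - 1, by omega⟩ := by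
    intro hv; have := congrArg Fin.val hv; simp at this; omega
  have hmem : 2 ∈ {k | ∃ S : Set (Fin n),
      (circularComplete n d).TotalDominatingSet S ∧ S.ncard = k} :=
    ⟨_, htds, Set.ncard_pair hne⟩
  rw [SimpleGraph.totalDominationNumber]
  refine le_antisymm (Nat.sInf_le hmem) ?_
  have hsm := Nat.sInf_mem ⟨2, hmem⟩
  obtain ⟨S, hS, hcard⟩ := hsm
  by_contra hlt
  push_neg at hlt
  have h01 : sInf {k | ∃ S : Set (Fin n),
      (circularComplete n d).TotalDominatingSet S ∧ S.ncard = k} = 0 ∨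
      sInf {k | ∃ S : Set (Fin n),
      (circularComplete n d).TotalDominatingSet S ∧ S.ncard = k} = 1 := by omega
  rcases h01 with h | h
  · rw [h] at hcard
    have : S = ∅ := (Set.ncard_eq_zero (Set.toFinite S)).mp hcard
    obtain ⟨u, hu, _⟩ := hS ⟨0, by omega⟩
    rw [this] at hu; exact hu
  · rw [h] at hcard
    obtain ⟨u, hu1⟩ := Set.ncard_eq_one.mp hcard
    subst hu1
    obtain ⟨w, hw, hadj⟩ := hS u
    rw [Set.mem_singleton_iff] at hw
    rw [hw] at hadj
    exact (circularComplete n d).loopless.irrefl u hadj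
end

section
/- For integers n and d with d ≥ 3 and 3d ≤ n ≤ 4d − 3, the circular complete graph K_{n,d} satisfies γ_t(K_{n,d}) = 3. -/
theorem totalDomination_circularComplete_eq_three (n d : ℕ) (hd : 3 ≤ d)
    (hn1 : 3 * d ≤ n) (hn2 : n ≤ 4 * d - 3) :
    (circularComplete n d).totalDominationNumber = 3 := by
  classical
  have hn : 9 ≤ n := by omega
  set G := circularComplete n d with hG
  have hadj : ∀ i j : Fin n, G.Adj i j ↔ (i.val ≠ j.val ∧
      d ≤ max i.val j.val - min i.val j.val ∧ max i.val j.val - min i.val j.val ≤ n - d) := by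
    intro i j
    constructor
    · rintro ⟨h1, h2, h3⟩
      exact ⟨fun h => h1 (Fin.ext h), h2, h3⟩
    · rintro ⟨h1, h2, h3⟩
      exact ⟨fun h => h1 (congrArg Fin.val h), h2, h3⟩
  -- the explicit total dominating set
  set S₀ : Set (Fin n) := {⟨0, by omega⟩, ⟨d, by omega⟩, ⟨2*d-1, by omega⟩} with hS₀
  have hTD : G.TotalDominatingSet S₀ := by
    intro v
    have hv := v.isLt
    by_cases h1 : v.val ≤ d - 1
    · refine ⟨⟨2*d-1, by omega⟩, by simp [hS₀], ?_⟩
      rw [hadj]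
      refine ⟨by simp; omega, by simp; omega, by simp; omega⟩
    · by_cases h2 : v.val ≤ n - d
      · refine ⟨⟨0, by omega⟩, by simp [hS₀], ?_⟩
        rw [hadj]
        refine ⟨by simp; omega, by simp; omega, by simp; omega⟩
      · refine ⟨⟨d, by omega⟩, by simp [hS₀], ?_⟩
        rw [hadj]
        refine ⟨by simp; omega, by simp; omega, by simp; omega⟩
  have hcard3 : S₀.ncard = 3 := by
    rw [hS₀]
    apply Set.ncard_eq_three.mpr
    refine ⟨_, _, _, ?_, ?_, ?_, rfl⟩
    · exact fun h => by have := congrArg Fin.val h; simp at this; omega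
    · exact fun h => by have := congrArg Fin.val h; simp at this; omega
    · exact fun h => by have := congrArg Fin.val h; simp at this; omega
  -- counting: each vertex dominates at most n - 2d + 1 vertices
  have hcount : ∀ u : Fin n, (Finset.univ.filter (fun v => G.Adj v u)).card ≤ n - 2*d + 1 := by
    intro u
    have hu := u.isLt
    have key : (Finset.univ.filter (fun v => G.Adj v u)).card ≤ (Finset.Icc d (n - d)).card := by
      apply Finset.card_le_card_of_injOn
        (fun v => if u.val ≤ v.val then v.val - u.val else n - (u.val - v.val))
      · intro v hv
        simp only [Finset.mem_coe, Finset.mem_filter, Finset.mem_univ, true_and] at hv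
        rw [hadj] at hv
        have hv' := v.isLt
        simp only [Finset.mem_coe, Finset.mem_Icc]
        split <;> omega
      · intro v1 h1 v2 h2 heq
        simp only [Finset.mem_coe, Finset.mem_filter, Finset.mem_univ, true_and] at h1 h2
        rw [hadj] at h1 h2
        have hv1 := v1.isLt
        have hv2 := v2.isLt
        apply Fin.ext
        simp only at heq
        split at heq <;> split at heq <;> omega
    rw [Nat.card_Icc] at key
    omega
  -- lower bound: any total dominating set has at least 3 elements
  have hlow : ∀ S : Set (Fin n), G.TotalDominatingSet S → 3 ≤ S.ncard := by
    intro S hS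
    by_contra hcon
    push_neg at hcon
    have hfin : S.Finite := Set.toFinite S
    have hsub : (Finset.univ : Finset (Fin n)) ⊆
        hfin.toFinset.biUnion (fun u => Finset.univ.filter (fun v => G.Adj v u)) := by
      intro v _
      obtain ⟨u, hu, ha⟩ := hS v
      exact Finset.mem_biUnion.mpr ⟨u, hfin.mem_toFinset.mpr hu, Finset.mem_filter.mpr ⟨Finset.mem_univ _, ha⟩⟩
    have hcT : hfin.toFinset.card ≤ 2 := by
      rw [← Set.ncard_eq_toFinset_card _ hfin]; omega
    have h1 : n ≤ hfin.toFinset.card * (n - 2*d + 1) := by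
      calc n = (Finset.univ : Finset (Fin n)).card := by simp
        _ ≤ (hfin.toFinset.biUnion (fun u => Finset.univ.filter (fun v => G.Adj v u))).card :=
            Finset.card_le_card hsub
        _ ≤ ∑ u ∈ hfin.toFinset, (Finset.univ.filter (fun v => G.Adj v u)).card :=
            Finset.card_biUnion_le
        _ ≤ ∑ _u ∈ hfin.toFinset, (n - 2*d + 1) :=
            Finset.sum_le_sum (fun u _ => hcount u)
        _ = hfin.toFinset.card * (n - 2*d + 1) := by
            rw [Finset.sum_const, smul_eq_mul]
    have h2 : hfin.toFinset.card * (n - 2*d + 1) ≤ 2 * (n - 2*d + 1) :=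
      Nat.mul_le_mul_right _ hcT
    omega
  unfold SimpleGraph.totalDominationNumber
  apply le_antisymm
  · apply Nat.sInf_le
    show ∃ S : Set (Fin n), G.TotalDominatingSet S ∧ S.ncard = 3
    exact ⟨S₀, hTD, hcard3⟩
  · apply le_csInf (Set.nonempty_of_mem
      (show (3:ℕ) ∈ {k | ∃ S : Set (Fin n), G.TotalDominatingSet S ∧ S.ncard = k} from
        ⟨S₀, hTD, hcard3⟩))
    rintro b ⟨S, hS, rfl⟩
    exact hlow S hS
end

section
/- For integers n and d with d ≥ 3 and 3d ≤ n ≤ 4d − 3, the circular complete graph K_{n,d} has no total dominating set of size 2. -/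
private lemma ccKey (n d x y : ℕ) (hd : 3 ≤ d) (hn1 : 3 * d ≤ n) (hn2 : n ≤ 4 * d - 3)
    (hx : x < n) (hy : y < n) (hxy : x ≤ y)
    (h : ∀ k, k < n →
      (k ≠ x ∧ d ≤ max k x - min k x ∧ max k x - min k x ≤ n - d) ∨
      (k ≠ y ∧ d ≤ max k y - min k y ∧ max k y - min k y ≤ n - d)) : False := by
  have h1 := h x hx
  have hj1 : d ≤ y - x ∧ y - x ≤ n - d := by
    rcases h1 with ⟨hne, _⟩ | ⟨hne, h2, h3⟩
    · omega
    · omega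
  have hA : x + d - 1 < n := by omega
  have h2 := h (x + d - 1) hA
  rcases le_or_gt (d - 1) x with hc | hc
  · have h3 := h (x - (d - 1)) (by omega)
    rcases h2 with ⟨e1, p1, q1⟩ | ⟨e1, p1, q1⟩ <;>
      rcases h3 with ⟨e2, p2, q2⟩ | ⟨e2, p2, q2⟩ <;> omega
  · have h3 := h (x + n - (d - 1)) (by omega)
    rcases h2 with ⟨e1, p1, q1⟩ | ⟨e1, p1, q1⟩ <;>
      rcases h3 with ⟨e2, p2, q2⟩ | ⟨e2, p2, q2⟩ <;> omega

theorem circularComplete_no_total_dominating_pair (n d : ℕ) (hd : 3 ≤ d)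
    (hn1 : 3 * d ≤ n) (hn2 : n ≤ 4 * d - 3) :
    ¬ ∃ S : Set (Fin n), (circularComplete n d).TotalDominatingSet S ∧ S.ncard = 2 := by
  rintro ⟨S, hdom, hcard⟩
  rw [Set.ncard_eq_two] at hcard
  obtain ⟨a, b, hab, rfl⟩ := hcard
  have hnat : ∀ k, k < n →
      (k ≠ a.val ∧ d ≤ max k a.val - min k a.val ∧ max k a.val - min k a.val ≤ n - d) ∨
      (k ≠ b.val ∧ d ≤ max k b.val - min k b.val ∧ max k b.val - min k b.val ≤ n - d) := by
    intro k hk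
    obtain ⟨u, hu, hadj⟩ := hdom ⟨k, hk⟩
    obtain ⟨hne, h1, h2⟩ := hadj
    rcases hu with rfl | rfl
    · left; exact ⟨fun he => hne (Fin.ext he), h1, h2⟩
    · right; exact ⟨fun he => hne (Fin.ext he), h1, h2⟩
  rcases le_total a.val b.val with hle | hle
  · exact ccKey n d a.val b.val hd hn1 hn2 a.isLt b.isLt hle hnat
  · exact ccKey n d b.val a.val hd hn1 hn2 b.isLt a.isLt hle
      (fun k hk => (hnat k hk).symm)
end

section
/- In a bipartite graph G with parts A and B, with no isolated vertices, satisfying γ_t(G) = n − Δ(G) + 1, let x ∈ A have degree Δ(G). Then every vertex y ∈ A \ {x} satisfies N(y) ⊄ N(x) (i.e., N(y) − N(x) ≠ ∅). -/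
theorem bipartite_extremal_neighborhood_not_subset
    {V : Type*} [Fintype V] (G : SimpleGraph V) [DecidableRel G.Adj]
    (A B : Set V) (hcov : A ∪ B = Set.univ) (hdisj : A ∩ B = ∅)
    (hbip : ∀ u v : V, G.Adj u v → (u ∈ A ∧ v ∈ B) ∨ (u ∈ B ∧ v ∈ A))
    (hiso : ∀ v : V, ∃ u : V, G.Adj v u)
    (hγ : G.totalDominationNumber = Fintype.card V - G.maxDegree + 1)
    (x : V) (hx : x ∈ A) (hdeg : G.degree x = G.maxDegree) :
    ∀ y ∈ A \ {x}, (G.neighborSet y \ G.neighborSet x).Nonempty := by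
  classical
  intro y hy
  by_contra hne
  -- so N(y) ⊆ N(x)
  have hysub : G.neighborSet y ⊆ G.neighborSet x := by
    intro w hw
    by_contra hwx
    exact hne ⟨w, hw, hwx⟩
  have hxA : x ∈ A := hx
  have hnAB : ∀ v, v ∉ A ∩ B := by
    intro v hv; rw [hdisj] at hv; exact hv
  -- every neighbor of x is in B
  have hNB : ∀ w, w ∈ G.neighborSet x → w ∈ B := by
    intro w hw
    rcases hbip x w hw with ⟨_, h⟩ | ⟨h, _⟩
    · exact h
    · exact absurd ⟨hx, h⟩ (hnAB x)
  -- chosen neighbor function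
  have hf : ∀ v : V, G.Adj v (hiso v).choose := fun v => (hiso v).choose_spec
  set f : V → V := fun v => (hiso v).choose with hfdef
  -- the set of vertices whose neighborhood is inside N(x)
  set Y : Set V := {v | G.neighborSet v ⊆ G.neighborSet x} with hY
  have hyY : y ∈ Y \ {x} := ⟨hysub, hy.2⟩
  -- Y is disjoint from N(x)
  have hYN : ∀ v ∈ Y, v ∉ G.neighborSet x := by
    intro v hv hvN
    have hvB : v ∈ B := hNB v hvN
    have hfvN : f v ∈ G.neighborSet x := hv (hf v)
    have hfvB : f v ∈ B := hNB _ hfvN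
    rcases hbip v (f v) (hf v) with ⟨h, _⟩ | ⟨_, h⟩
    · exact hnAB v ⟨h, hvB⟩
    · exact hnAB (f v) ⟨h, hfvB⟩
  set C : Set V := (Set.univ \ G.neighborSet x) \ (Y \ {x}) with hC
  set T : Set V := f '' (Y \ {x}) with hT
  set S : Set V := C ∪ T with hS
  have hxS : x ∈ S := by
    refine Or.inl ⟨⟨trivial, ?_⟩, ?_⟩
    · simp [SimpleGraph.mem_neighborSet]
    · intro h; exact h.2 rfl
  -- S is a total dominating set
  have hTDS : G.TotalDominatingSet S := by
    intro v
    by_cases hvY : v ∈ Y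
    · by_cases hvx : v = x
      · refine ⟨f y, Or.inr ⟨y, hyY, rfl⟩, ?_⟩
        subst hvx
        exact (SimpleGraph.mem_neighborSet _ _ _).mp (hysub (hf y))
      · exact ⟨f v, Or.inr ⟨v, ⟨hvY, hvx⟩, rfl⟩, hf v⟩
    · by_cases hvN : v ∈ G.neighborSet x
      · exact ⟨x, hxS, (G.adj_symm hvN)⟩
      · -- v has a neighbor outside N(x)
        have : ∃ w, G.Adj v w ∧ w ∉ G.neighborSet x := by
          by_contra h
          push_neg at h
          exact hvY (fun w hw => h w hw)
        obtain ⟨w, hvw, hwN⟩ := this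
        refine ⟨w, Or.inl ⟨⟨trivial, hwN⟩, ?_⟩, hvw⟩
        rintro ⟨hwY, hwx⟩
        exact hvN (hwY (G.adj_symm hvw))
  -- cardinality bound
  have hfin : (Set.univ \ G.neighborSet x).Finite := Set.toFinite _
  have hsub : Y \ {x} ⊆ Set.univ \ G.neighborSet x := by
    intro v hv
    exact ⟨trivial, hYN v hv.1⟩
  have hNcard : (G.neighborSet x).ncard = G.maxDegree := by
    rw [Set.ncard_eq_toFinset_card', ← hdeg]
    simp [SimpleGraph.degree, SimpleGraph.neighborFinset]
  have hUcard : (Set.univ \ G.neighborSet x).ncard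
      = Fintype.card V - G.maxDegree := by
    rw [Set.ncard_diff (Set.subset_univ _), Set.ncard_univ, hNcard,
      Nat.card_eq_fintype_card]
  have hCcard : C.ncard = (Fintype.card V - G.maxDegree) - (Y \ {x}).ncard := by
    rw [hC, Set.ncard_diff hsub, hUcard]
  have hTcard : T.ncard ≤ (Y \ {x}).ncard := Set.ncard_image_le (Set.toFinite _)
  have hk1 : 1 ≤ (Y \ {x}).ncard := (Set.ncard_pos (Set.toFinite _)).mpr ⟨y, hyY⟩
  have hkle : (Y \ {x}).ncard ≤ Fintype.card V - G.maxDegree := by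
    rw [← hUcard]; exact Set.ncard_le_ncard hsub hfin
  have hScard : S.ncard ≤ Fintype.card V - G.maxDegree := by
    calc S.ncard ≤ C.ncard + T.ncard := Set.ncard_union_le _ _
    _ ≤ (Fintype.card V - G.maxDegree - (Y \ {x}).ncard) + (Y \ {x}).ncard := by
        rw [hCcard]; omega
    _ ≤ Fintype.card V - G.maxDegree := by omega
  have hle : G.totalDominationNumber ≤ S.ncard :=
    Nat.sInf_le ⟨S, hTDS, rfl⟩
  rw [hγ] at hle
  omega
end
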